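/- arXiv:1003.3138 — 11 statements merged into one kernel-verified Lean document; each statement's English description precedes it below -/
import Mathlib

section
/- Let π be an 𝓔-measurable quasi-probability kernel, let D ∈ 𝓔, and let ρ be the restriction of π to D. Then ρ is a refinement of π if and only if μ(D) = 1 for every μ ∈ J_𝓔(π). -/
open MeasureTheory
open scoped ENNReal

variable {X : Type*}

/-- A quasi-probability kernel on `(X, mX)`: `π(·,F)` is `mX`-measurable for each
`mX`-measurable `F`, and each `π(x,·)` is a measure with total mass `0` or `1`. -/
def IsQPK (mX : MeasurableSpace X) (π : X → @Measure X mX) : Prop :=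
  (∀ F : Set X, MeasurableSet[mX] F → Measurable[mX] fun x => π x F) ∧
    (∀ x : X, π x Set.univ = 0 ∨ π x Set.univ = 1)

/-- The support `S_π = {x : π(x,X) = 1}` of a quasi-probability kernel. -/
def qpkSupp (mX : MeasurableSpace X) (π : X → @Measure X mX) : Set X :=
  {x | π x Set.univ = 1}

/-- `π` is `𝓔`-measurable: `π(·,F)` is `𝓔`-measurable for each `mX`-measurable `F`. -/
def EMeasK (mX 𝓔 : MeasurableSpace X) (π : X → @Measure X mX) : Prop :=
  ∀ F : Set X, MeasurableSet[mX] F → Measurable[𝓔] fun x => π x F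

/-- `J_𝓔(π)`: the set of probability measures `μ` on `(X, mX)` with
`μ(E ∩ F) = ∫_E π(·,F) dμ` for all `E ∈ 𝓔` and `F ∈ mX`. -/
def J (mX 𝓔 : MeasurableSpace X) (π : X → @Measure X mX) : Set (@Measure X mX) :=
  {μ | IsProbabilityMeasure μ ∧ ∀ E F : Set X, MeasurableSet[𝓔] E → MeasurableSet[mX] F →
      μ (E ∩ F) = ∫⁻ x in E, π x F ∂μ}

/-- `J_⋆(π)`: the set of probability measures `μ` on `(X, mX)` with
`μ(F) = ∫ π(·,F) dμ` for all `F ∈ mX`. -/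
def Jstar (mX : MeasurableSpace X) (π : X → @Measure X mX) : Set (@Measure X mX) :=
  {μ | IsProbabilityMeasure μ ∧ ∀ F : Set X, MeasurableSet[mX] F → μ F = ∫⁻ x, π x F ∂μ}

/-- `π` is proper as an `𝓔`-measurable kernel: `π(x, E ∩ F) = 1_E(x)·π(x,F)` for all
`E ∈ 𝓔`, `F ∈ mX` and `x ∈ X`. -/
def IsProperK (mX 𝓔 : MeasurableSpace X) (π : X → @Measure X mX) : Prop :=
  ∀ E F : Set X, MeasurableSet[𝓔] E → MeasurableSet[mX] F → ∀ x : X,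
    π x (E ∩ F) = Set.indicator E (fun _ => π x F) x

/-- `μ` is trivial on `𝓔` if `μ(E) ∈ {0,1}` for every `E ∈ 𝓔`. -/
def IsTrivialOn (mX 𝓔 : MeasurableSpace X) (μ : @Measure X mX) : Prop :=
  ∀ E : Set X, MeasurableSet[𝓔] E → μ E = 0 ∨ μ E = 1

/-- `π` is adapted if `π(x,·) ∈ J_𝓔(π)` for every `x ∈ S_π`. -/
def IsAdaptedK (mX 𝓔 : MeasurableSpace X) (π : X → @Measure X mX) : Prop :=
  ∀ x ∈ qpkSupp mX π, π x ∈ J mX 𝓔 π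

/-- `π` is normal if it is adapted and `π(x,·)` is trivial on `𝓔` for every `x ∈ S_π`. -/
def IsNormalK (mX 𝓔 : MeasurableSpace X) (π : X → @Measure X mX) : Prop :=
  IsAdaptedK mX 𝓔 π ∧ ∀ x ∈ qpkSupp mX π, IsTrivialOn mX 𝓔 (π x)

/-- The restriction of `π` to `D`: the kernel `ρ(x,F) = 1_D(x)·π(x,F)`. -/
noncomputable def kerRestrict (mX : MeasurableSpace X) (π : X → @Measure X mX) (D : Set X) :
    X → @Measure X mX :=
  Set.indicator D π

/-- `ρ` is a refinement of `π`: an `𝓔`-measurable quasi-probability kernel which is the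
restriction of `π` to some `D ∈ 𝓔` and satisfies `J_𝓔(ρ) = J_𝓔(π)`. -/
def IsRefinement (mX 𝓔 : MeasurableSpace X) (π ρ : X → @Measure X mX) : Prop :=
  IsQPK mX ρ ∧ EMeasK mX 𝓔 ρ ∧ (∃ D : Set X, MeasurableSet[𝓔] D ∧ ρ = kerRestrict mX π D) ∧
    J mX 𝓔 ρ = J mX 𝓔 π

/-- `Δ^π_μ = {x ∈ S_π : π(x,·) = μ}`. -/
def DeltaM (mX : MeasurableSpace X) (π : X → @Measure X mX) (μ : @Measure X mX) : Set X :=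
  {x ∈ qpkSupp mX π | π x = μ}

/-- `Δ^π_x = {y ∈ S_π : π(y,·) = π(x,·)}`. -/
def Delta (mX : MeasurableSpace X) (π : X → @Measure X mX) (x : X) : Set X :=
  {y ∈ qpkSupp mX π | π y = π x}

/-- `𝓝_π`: the σ-algebra of `mX`-measurable sets `N` such that for every `x ∈ S_π` either
`Δ^π_x ⊆ N` or `Δ^π_x ∩ N = ∅`. -/
def NSigma (mX : MeasurableSpace X) (π : X → @Measure X mX) : MeasurableSpace X where
  MeasurableSet' N := MeasurableSet[mX] N ∧
    ∀ x ∈ qpkSupp mX π, Delta mX π x ⊆ N ∨ Delta mX π x ∩ N = ∅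
  measurableSet_empty :=
    ⟨@MeasurableSet.empty X mX, fun _ _ => Or.inr (Set.inter_empty _)⟩
  measurableSet_compl := by
    rintro N ⟨hN, h⟩
    refine ⟨hN.compl, fun x hx => ?_⟩
    rcases h x hx with h1 | h1
    · refine Or.inr ?_
      ext y
      simp only [Set.mem_inter_iff, Set.mem_compl_iff, Set.mem_empty_iff_false, iff_false,
        not_and, not_not]
      exact fun hy => h1 hy
    · exact Or.inl fun y hy hyN => (Set.eq_empty_iff_forall_notMem.1 h1) y ⟨hy, hyN⟩
  measurableSet_iUnion := by
    intro f hf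
    refine ⟨MeasurableSet.iUnion fun i => (hf i).1, fun x hx => ?_⟩
    by_cases hc : ∃ i, Delta mX π x ⊆ f i
    · rcases hc with ⟨i, hi⟩
      exact Or.inl (hi.trans (Set.subset_iUnion f i))
    · push_neg at hc
      refine Or.inr ?_
      ext y
      simp only [Set.mem_inter_iff, Set.mem_iUnion, Set.mem_empty_iff_false, iff_false, not_and]
      rintro hy ⟨i, hyi⟩
      rcases (hf i).2 x hx with h1 | h1
      · exact hc i h1
      · exact (Set.eq_empty_iff_forall_notMem.1 h1) y ⟨hy, hyi⟩

/-- `𝓢_π`: the least σ-algebra making all the functions `π(·,F)`, `F ∈ mX`, measurable,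
i.e. the σ-algebra generated by these functions. -/
def Spi (mX : MeasurableSpace X) (π : X → @Measure X mX) : MeasurableSpace X :=
  ⨆ F ∈ {F : Set X | MeasurableSet[mX] F},
    MeasurableSpace.comap (fun x => π x F) inferInstance

/-- `ρ`, the restriction of `π` to `D ∈ 𝓔`, is a refinement of `π` iff
`μ(D) = 1` for every `μ ∈ J_𝓔(π)`. -/
theorem stmt0 (mX : MeasurableSpace X) (hCG : @MeasurableSpace.CountablyGenerated X mX)
    (𝓔 : MeasurableSpace X) (h𝓔 : 𝓔 ≤ mX)
    (π : X → @Measure X mX) (hπ : IsQPK mX π) (hπE : EMeasK mX 𝓔 π)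
    (D : Set X) (hD : MeasurableSet[𝓔] D)
    (ρ : X → @Measure X mX) (hρ : ρ = kerRestrict mX π D) :
    IsRefinement mX 𝓔 π ρ ↔ ∀ μ ∈ J mX 𝓔 π, μ D = 1 := by
  subst hρ
  have hDm : MeasurableSet[mX] D := h𝓔 D hD
  have hρ_apply : ∀ (x : X) (F : Set X),
      kerRestrict mX π D x F = Set.indicator D (fun x => π x F) x := by
    intro x F
    by_cases hx : x ∈ D <;>
      simp [kerRestrict, Set.indicator_of_mem, Set.indicator_of_notMem, hx]
  have hint : ∀ (μ : @Measure X mX) (E F : Set X), MeasurableSet[mX] E →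
      ∫⁻ x in E, kerRestrict mX π D x F ∂μ = ∫⁻ x in E ∩ D, π x F ∂μ := by
    intro μ E F hE
    simp only [hρ_apply]
    rw [lintegral_indicator hDm, Measure.restrict_restrict hDm, Set.inter_comm D E]
  -- every μ ∈ J ρ has μ D = 1 and lies in J π
  have hsub : ∀ μ ∈ J mX 𝓔 (kerRestrict mX π D), μ D = 1 ∧ μ ∈ J mX 𝓔 π := by
    intro μ hμ
    obtain ⟨hprob, hμJ⟩ := hμ
    haveI := hprob
    have h1 : μ D = 1 := by
      have h := hμJ Set.univ Set.univ MeasurableSet.univ MeasurableSet.univ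
      rw [Set.univ_inter, measure_univ, Measure.restrict_univ] at h
      have hle : ∫⁻ x, kerRestrict mX π D x Set.univ ∂μ ≤ μ D := by
        calc ∫⁻ x, kerRestrict mX π D x Set.univ ∂μ
            ≤ ∫⁻ x, D.indicator (fun _ => 1) x ∂μ := by
              refine lintegral_mono fun x => ?_
              rw [hρ_apply]
              by_cases hx : x ∈ D
              · simp only [Set.indicator_of_mem hx]
                rcases hπ.2 x with h' | h' <;> simp [h']
              · simp [Set.indicator_of_notMem hx]
          _ = μ D := lintegral_indicator_one hDm
      exact le_antisymm prob_le_one (h ▸ hle)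
    have hDc : μ Dᶜ = 0 := by
      rw [measure_compl hDm (measure_ne_top μ D), h1, measure_univ]; simp
    have hae : D =ᵐ[μ] (Set.univ : Set X) := ae_eq_univ.mpr hDc
    have haeED : ∀ E : Set X, (E ∩ D : Set X) =ᵐ[μ] E := by
      intro E
      have := (Filter.EventuallyEq.refl (ae μ) E).inter hae
      rwa [Set.inter_univ] at this
    refine ⟨h1, hprob, fun E F hE hF => ?_⟩
    have hE' : MeasurableSet[mX] E := h𝓔 E hE
    rw [hμJ E F hE hF, hint μ E F hE', Measure.restrict_congr_set (haeED E)]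
  constructor
  · rintro ⟨_, _, _, hJ⟩ μ hμ
    exact (hsub μ (hJ ▸ hμ)).1
  · intro hall
    refine ⟨⟨?_, ?_⟩, ?_, ⟨D, hD, rfl⟩, ?_⟩
    · intro F hF
      have : Measurable[mX] (D.indicator (fun x => π x F)) :=
        (hπ.1 F hF).indicator hDm
      simpa only [hρ_apply] using this
    · intro x
      rw [hρ_apply]
      by_cases hx : x ∈ D
      · simp only [Set.indicator_of_mem hx]; exact hπ.2 x
      · simp [Set.indicator_of_notMem hx]
    · intro F hF
      have : Measurable[𝓔] (D.indicator (fun x => π x F)) :=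
        (hπE F hF).indicator hD
      simpa only [hρ_apply] using this
    · refine Set.Subset.antisymm (fun μ hμ => (hsub μ hμ).2) (fun μ hμ => ?_)
      obtain ⟨hprob, hμJ⟩ := hμ
      haveI := hprob
      have h1 : μ D = 1 := hall μ ⟨hprob, hμJ⟩
      have hDc : μ Dᶜ = 0 := by
        rw [measure_compl hDm (measure_ne_top μ D), h1, measure_univ]; simp
      have hae : D =ᵐ[μ] (Set.univ : Set X) := ae_eq_univ.mpr hDc
      refine ⟨hprob, fun E F hE hF => ?_⟩
      have hE' : MeasurableSet[mX] E := h𝓔 E hE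
      have haeq : ((E ∩ D ∩ F : Set X) : Set X) =ᵐ[μ] ((E ∩ F : Set X) : Set X) := by
        have h2 : (E ∩ D : Set X) =ᵐ[μ] E := by
          have := (Filter.EventuallyEq.refl (ae μ) E).inter hae
          rwa [Set.inter_univ] at this
        exact h2.inter (Filter.EventuallyEq.refl (ae μ) F)
      rw [hint μ E F hE', ← hμJ (E ∩ D) F (hE.inter hD) hF, measure_congr haeq]
end

section
/- Every proper 𝓔-measurable quasi-probability kernel π is normal; that is, for every x ∈ S_π the measure π(x,·) belongs to J_𝓔(π) and is trivial on 𝓔. -/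
open MeasureTheory
open scoped ENNReal

variable {X : Type*}

/-- every proper `𝓔`-measurable quasi-probability kernel is normal. -/
theorem stmt1 (mX : MeasurableSpace X) (hCG : @MeasurableSpace.CountablyGenerated X mX)
    (𝓔 : MeasurableSpace X) (h𝓔 : 𝓔 ≤ mX)
    (π : X → @Measure X mX) (hπ : IsQPK mX π) (hπE : EMeasK mX 𝓔 π)
    (hprop : IsProperK mX 𝓔 π) :
    IsNormalK mX 𝓔 π := by
  have key : ∀ x ∈ qpkSupp mX π, ∀ E : Set X, MeasurableSet[𝓔] E →
      π x E = Set.indicator E (fun _ => (1 : ℝ≥0∞)) x := by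
    intro x hx E hE
    have h := hprop E Set.univ hE MeasurableSet.univ x
    rw [Set.inter_univ] at h
    rw [h]
    simp only [qpkSupp, Set.mem_setOf_eq] at hx
    by_cases hxE : x ∈ E
    · simpa [hxE] using hx
    · simp [hxE]
  constructor
  · intro x hx
    refine ⟨⟨hx⟩, fun E F hE hF => ?_⟩
    have htrim : (π x).trim h𝓔 = @Measure.dirac X 𝓔 x := by
      refine @Measure.ext X 𝓔 _ _ fun s hs => ?_
      rw [trim_measurableSet_eq h𝓔 hs, key x hx s hs, @Measure.dirac_apply' X 𝓔 s x hs]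
      rfl
    have hmeas : Measurable[𝓔] (Set.indicator E (fun y => π y F)) :=
      (hπE F hF).indicator hE
    calc π x (E ∩ F) = Set.indicator E (fun _ => π x F) x := hprop E F hE hF x
      _ = Set.indicator E (fun y => π y F) x := by by_cases h : x ∈ E <;> simp [h]
      _ = ∫⁻ y, Set.indicator E (fun y => π y F) y ∂(@Measure.dirac X 𝓔 x) :=
          (lintegral_dirac' x hmeas).symm
      _ = ∫⁻ y, Set.indicator E (fun y => π y F) y ∂((π x).trim h𝓔) := by rw [htrim]
      _ = ∫⁻ y, Set.indicator E (fun y => π y F) y ∂(π x) := lintegral_trim h𝓔 hmeas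
      _ = ∫⁻ y in E, π y F ∂(π x) := lintegral_indicator (h𝓔 E hE) _
  · intro x hx E hE
    rw [key x hx E hE]
    by_cases h : x ∈ E <;> simp [h]
end

section
/- If the 𝓔-measurable quasi-probability kernel π is adapted, then J_𝓔(π) = J_⋆(π). -/
open MeasureTheory
open scoped ENNReal

variable {X : Type*}

/-- if `π` is adapted then `J_𝓔(π) = J_⋆(π)`. -/
theorem stmt2 (mX : MeasurableSpace X) (hCG : @MeasurableSpace.CountablyGenerated X mX)
    (𝓔 : MeasurableSpace X) (h𝓔 : 𝓔 ≤ mX)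
    (π : X → @Measure X mX) (hπ : IsQPK mX π) (hπE : EMeasK mX 𝓔 π)
    (had : IsAdaptedK mX 𝓔 π) :
    J mX 𝓔 π = Jstar mX π := by
  letI := mX
  apply Set.Subset.antisymm
  · rintro μ ⟨hprob, h⟩
    exact ⟨hprob, fun F hF => by simpa using h Set.univ F MeasurableSet.univ hF⟩
  · rintro μ ⟨hprob, h⟩
    haveI : IsProbabilityMeasure μ := hprob
    refine ⟨hprob, fun E F hE hF => ?_⟩
    have hEm : MeasurableSet[mX] E := h𝓔 E hE
    have hπm : Measurable π := Measure.measurable_of_measurable_coe π hπ.1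
    -- μ.bind π = μ
    have hbind : μ.bind π = μ := by
      ext s hs
      rw [Measure.bind_apply hs hπm.aemeasurable]
      exact (h s hs).symm
    -- a.e. support
    set A : Set X := {x | π x Set.univ = 0} with hA
    have hAm : MeasurableSet[mX] A := hπ.1 Set.univ MeasurableSet.univ (measurableSet_singleton 0)
    have hAc : Aᶜ = qpkSupp mX π := by
      ext x
      simp only [Set.mem_compl_iff, hA, Set.mem_setOf_eq, qpkSupp]
      rcases hπ.2 x with hh | hh <;> simp [hh]
    have hA0 : μ A = 0 := by
      have h1 : (1 : ℝ≥0∞) = ∫⁻ x, π x Set.univ ∂μ := by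
        have := h Set.univ MeasurableSet.univ
        simpa using this
      have hsplit : ∫⁻ x, π x Set.univ ∂μ
          = ∫⁻ x in A, π x Set.univ ∂μ + ∫⁻ x in Aᶜ, π x Set.univ ∂μ :=
        (lintegral_add_compl _ hAm).symm
      have hzero : ∫⁻ x in A, π x Set.univ ∂μ = 0 := by
        rw [setLIntegral_congr_fun hAm (show Set.EqOn (fun x => π x Set.univ) (fun _ => 0) A from fun x hx => hx)]
        simp
      have hle : ∫⁻ x in Aᶜ, π x Set.univ ∂μ ≤ μ Aᶜ := by
        calc ∫⁻ x in Aᶜ, π x Set.univ ∂μ ≤ ∫⁻ _ in Aᶜ, 1 ∂μ := by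
              apply lintegral_mono
              intro x
              rcases hπ.2 x with hh | hh <;> simp [hh]
          _ = μ Aᶜ := by simp
      have h1le : (1 : ℝ≥0∞) ≤ μ Aᶜ := by
        rw [h1, hsplit, hzero, zero_add]; exact hle
      have hAc1 : μ Aᶜ = 1 := le_antisymm prob_le_one h1le
      have := (prob_compl_eq_zero_iff hAm.compl).2 hAc1
      simpa using this
    have hae : ∀ᵐ x ∂μ, x ∈ qpkSupp mX π := by
      rw [← hAc]
      exact (measure_eq_zero_iff_ae_notMem.1 hA0).mono fun x hx => hx
    -- main computation
    have hgm : Measurable (E.indicator fun y => π y F) :=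
      (hπ.1 F hF).indicator hEm
    calc μ (E ∩ F) = ∫⁻ x, π x (E ∩ F) ∂μ := h _ (hEm.inter hF)
      _ = ∫⁻ x, ∫⁻ y, E.indicator (fun y => π y F) y ∂(π x) ∂μ := by
          apply lintegral_congr_ae
          filter_upwards [hae] with x hx
          have := (had x hx).2 E F hE hF
          rw [this, ← lintegral_indicator hEm]
      _ = ∫⁻ y, E.indicator (fun y => π y F) y ∂(μ.bind π) :=
          (Measure.lintegral_bind hπm.aemeasurable hgm.aemeasurable).symm
      _ = ∫⁻ y in E, π y F ∂μ := by rw [hbind, lintegral_indicator hEm]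
end

section
/- Let π be an adapted 𝓔-measurable quasi-probability kernel and let τ be an arbitrary (not necessarily 𝓔-measurable) quasi-probability kernel such that J_𝓔(π) ⊆ J_⋆(τ). Then πτ = π. In particular, ππ = π. -/
open MeasureTheory
open scoped ENNReal

variable {X : Type*}

/-- if `π` is adapted and `τ` is a quasi-probability kernel with
`J_𝓔(π) ⊆ J_⋆(τ)` then `πτ = π`; in particular `ππ = π`. -/
theorem stmt3 (mX : MeasurableSpace X) (hCG : @MeasurableSpace.CountablyGenerated X mX)
    (𝓔 : MeasurableSpace X) (h𝓔 : 𝓔 ≤ mX)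
    (π : X → @Measure X mX) (hπ : IsQPK mX π) (hπE : EMeasK mX 𝓔 π)
    (had : IsAdaptedK mX 𝓔 π)
    (τ : X → @Measure X mX) (hτ : IsQPK mX τ) (hJ : J mX 𝓔 π ⊆ Jstar mX τ) :
    (∀ x : X, ∀ F : Set X, MeasurableSet[mX] F → ∫⁻ y, τ y F ∂(π x) = π x F) ∧
      (∀ x : X, ∀ F : Set X, MeasurableSet[mX] F → ∫⁻ y, π y F ∂(π x) = π x F) := by
  constructor
  · intro x F hF
    by_cases hx : x ∈ qpkSupp mX π
    · obtain ⟨_, h2⟩ := hJ (had x hx)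
      exact (h2 F hF).symm
    · have h0 : π x = 0 := by
        rcases hπ.2 x with h | h
        · exact Measure.measure_univ_eq_zero.mp h
        · exact absurd h hx
      simp [h0]
  · intro x F hF
    by_cases hx : x ∈ qpkSupp mX π
    · obtain ⟨_, h2⟩ := had x hx
      have := h2 Set.univ F MeasurableSet.univ hF
      simpa using this.symm
    · have h0 : π x = 0 := by
        rcases hπ.2 x with h | h
        · exact Measure.measure_univ_eq_zero.mp h
        · exact absurd h hx
      simp [h0]
end

section
/- If the sub-σ-algebra 𝓔 is countably generated, then every 𝓔-measurable quasi-probability kernel π admits a proper 𝓔-measurable refinement ρ. -/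
open MeasureTheory
open scoped ENNReal

variable {X : Type*}

lemma kerRestrict_apply (mX : MeasurableSpace X) (π : X → @Measure X mX) (D : Set X)
    (x : X) (F : Set X) :
    kerRestrict mX π D x F = Set.indicator D (fun y => π y F) x := by
  by_cases h : x ∈ D
  · simp [kerRestrict, Set.indicator_of_mem h]
  · simp [kerRestrict, Set.indicator_of_notMem h]

lemma ae_one_on {mX : MeasurableSpace X} (μ : @Measure X mX) {f : X → ℝ≥0∞}
    (hf : Measurable[mX] f) (hf1 : ∀ x, f x ≤ 1) {E : Set X} (hE : MeasurableSet[mX] E)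
    (hμE : μ E ≠ ⊤) (h : ∫⁻ x in E, f x ∂μ = μ E) : ∀ᵐ x ∂μ, x ∈ E → f x = 1 := by
  have hsub : ∫⁻ x in E, (1 - f x) ∂μ = 0 := by
    rw [lintegral_sub hf (by rw [h]; exact hμE)
      (Filter.Eventually.of_forall fun x => hf1 x), h, lintegral_one,
      Measure.restrict_apply_univ, tsub_self]
  have h0 : ∀ᵐ x ∂μ.restrict E, (1 : ℝ≥0∞) - f x = 0 :=
    (lintegral_eq_zero_iff (measurable_const.sub hf)).mp hsub
  have h1 := (ae_restrict_iff' hE).mp h0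
  filter_upwards [h1] with x hx hxE
  exact le_antisymm (hf1 x) (tsub_eq_zero_iff_le.mp (hx hxE))

/-- if `𝓔` is countably generated, every `𝓔`-measurable quasi-probability
kernel admits a proper `𝓔`-measurable refinement. -/
theorem stmt4 (mX : MeasurableSpace X) (hCG : @MeasurableSpace.CountablyGenerated X mX)
    (𝓔 : MeasurableSpace X) (h𝓔 : 𝓔 ≤ mX)
    (hcg𝓔 : @MeasurableSpace.CountablyGenerated X 𝓔)
    (π : X → @Measure X mX) (hπ : IsQPK mX π) (hπE : EMeasK mX 𝓔 π) :
    ∃ ρ : X → @Measure X mX, IsRefinement mX 𝓔 π ρ ∧ IsProperK mX 𝓔 ρ := by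
  classical
  obtain ⟨b, hbc, hb2⟩ := hcg𝓔.isCountablyGenerated
  -- every set in `b` is `𝓔`-measurable
  have hbE : ∀ S ∈ b, MeasurableSet[𝓔] S := fun S hS => by
    rw [hb2]; exact MeasurableSpace.measurableSet_generateFrom hS
  -- pointwise mass bound
  have hle1 : ∀ x (F : Set X), π x F ≤ 1 := by
    intro x F
    refine (measure_mono (Set.subset_univ F)).trans ?_
    rcases hπ.2 x with h | h <;> simp [h]
  -- the good set D
  set D : Set X := qpkSupp mX π ∩
      {x | ∀ S ∈ b, π x S = Set.indicator S (fun _ => (1 : ℝ≥0∞)) x} with hD_def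
  have hDsupp : D ⊆ qpkSupp mX π := Set.inter_subset_left
  -- key: for x ∈ D, π x agrees with δ_x on 𝓔
  have hKey : ∀ x ∈ D, ∀ E : Set X, MeasurableSet[𝓔] E →
      π x E = Set.indicator E (fun _ => (1 : ℝ≥0∞)) x := by
    rintro x ⟨hxS, hxb⟩ E hE
    rw [hb2] at hE
    induction E, hE using MeasurableSpace.generateFrom_induction with
    | hC t htb _ => exact hxb t htb
    | empty => simp
    | compl t ht hi =>
      have htE : MeasurableSet[𝓔] t := by rw [hb2]; exact ht
      have htm : MeasurableSet[mX] t := h𝓔 _ htE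
      rw [measure_compl htm (ne_top_of_le_ne_top ENNReal.one_ne_top (hle1 x t)), hxS, hi]
      by_cases hxt : x ∈ t
      · rw [Set.indicator_of_mem hxt,
          Set.indicator_of_notMem (Set.notMem_compl_iff.mpr hxt), tsub_self]
      · rw [Set.indicator_of_notMem hxt, Set.indicator_of_mem (Set.mem_compl hxt), tsub_zero]
    | iUnion s hs hi =>
      by_cases hx : ∃ n, x ∈ s n
      · obtain ⟨n, hn⟩ := hx
        have h1 : π x (s n) = 1 := by rw [hi n, Set.indicator_of_mem hn]
        have hxU : x ∈ ⋃ i, s i := Set.mem_iUnion.mpr ⟨n, hn⟩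
        rw [Set.indicator_of_mem hxU]
        exact le_antisymm (hle1 x _) (h1 ▸ measure_mono (Set.subset_iUnion s n))
      · push_neg at hx
        have hxU : x ∉ ⋃ i, s i := by simpa using hx
        rw [Set.indicator_of_notMem hxU]
        refine le_antisymm ((measure_iUnion_le s).trans ?_) zero_le
        have : ∀ n, π x (s n) = 0 := fun n => by
          rw [hi n, Set.indicator_of_notMem (hx n)]
        simp [this]
  -- measurability of D
  have hDE : MeasurableSet[𝓔] D := by
    have hsupp : MeasurableSet[𝓔] (qpkSupp mX π) := by
      have := hπE Set.univ MeasurableSet.univ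
      exact this (measurableSet_singleton 1)
    have hset : {x | ∀ S ∈ b, π x S = Set.indicator S (fun _ => (1 : ℝ≥0∞)) x} =
        ⋂ S ∈ b, ((S ∩ (fun x => π x S) ⁻¹' {1}) ∪ (Sᶜ ∩ (fun x => π x S) ⁻¹' {0})) := by
      ext x
      simp only [Set.mem_setOf_eq, Set.mem_iInter]
      refine ⟨fun h S hS => ?_, fun h S hS => ?_⟩
      · by_cases hxS : x ∈ S
        · exact Or.inl ⟨hxS, by simp [h S hS, Set.indicator_of_mem hxS]⟩
        · exact Or.inr ⟨hxS, by simp [h S hS, Set.indicator_of_notMem hxS]⟩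
      · rcases h S hS with ⟨hxS, hv⟩ | ⟨hxS, hv⟩
        · simp only [Set.mem_preimage, Set.mem_singleton_iff] at hv
          rw [hv, Set.indicator_of_mem hxS]
        · simp only [Set.mem_preimage, Set.mem_singleton_iff] at hv
          rw [hv, Set.indicator_of_notMem hxS]
    refine hsupp.inter ?_
    rw [hset]
    refine MeasurableSet.biInter hbc fun S hS => ?_
    have hm : Measurable[𝓔] fun x => π x S := hπE S (h𝓔 _ (hbE S hS))
    exact ((hbE S hS).inter (hm (measurableSet_singleton 1))).union
      ((hbE S hS).compl.inter (hm (measurableSet_singleton 0)))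
  have hDm : MeasurableSet[mX] D := h𝓔 _ hDE
  set ρ : X → @Measure X mX := kerRestrict mX π D with hρ_def
  have hρ_apply : ∀ x F, ρ x F = Set.indicator D (fun y => π y F) x :=
    fun x F => kerRestrict_apply mX π D x F
  -- every μ ∈ J(π) is concentrated on D
  have hconc : ∀ μ : @Measure X mX, μ ∈ J mX 𝓔 π → ∀ᵐ x ∂μ, x ∈ D := by
    rintro μ ⟨hP, hμ⟩
    haveI := hP
    have hsupp_ae : ∀ᵐ x ∂μ, x ∈ qpkSupp mX π := by
      have h1 : ∫⁻ x in Set.univ, π x Set.univ ∂μ = μ Set.univ := by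
        rw [← hμ Set.univ Set.univ MeasurableSet.univ MeasurableSet.univ, Set.univ_inter]
      have := ae_one_on μ (hπ.1 Set.univ MeasurableSet.univ) (fun x => hle1 x _)
        MeasurableSet.univ (measure_ne_top μ _) h1
      filter_upwards [this] with x hx
      exact hx (Set.mem_univ x)
    have hgen : ∀ᵐ x ∂μ, ∀ S ∈ b, π x S = Set.indicator S (fun _ => (1 : ℝ≥0∞)) x := by
      rw [ae_ball_iff hbc]
      intro S hSb
      have hSE : MeasurableSet[𝓔] S := hbE S hSb
      have hSm : MeasurableSet[mX] S := h𝓔 _ hSE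
      have hone : ∀ᵐ x ∂μ, x ∈ S → π x S = 1 := by
        refine ae_one_on μ (hπ.1 S hSm) (fun x => hle1 x _) hSm (measure_ne_top μ _) ?_
        rw [← hμ S S hSE hSm, Set.inter_self]
      have hzero : ∀ᵐ x ∂μ, x ∈ Sᶜ → π x S = 0 := by
        have h0 : ∫⁻ x in Sᶜ, π x S ∂μ = 0 := by
          rw [← hμ Sᶜ S hSE.compl hSm, Set.compl_inter_self, measure_empty]
        exact (setLIntegral_eq_zero_iff hSm.compl (hπ.1 S hSm)).mp h0
      filter_upwards [hone, hzero] with x h1 h2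
      by_cases hxS : x ∈ S
      · rw [h1 hxS, Set.indicator_of_mem hxS]
      · rw [h2 hxS, Set.indicator_of_notMem hxS]
    filter_upwards [hsupp_ae, hgen] with x h1 h2
    exact ⟨h1, h2⟩
  -- integral congruence when μ is concentrated on D
  have hcongr : ∀ (μ : @Measure X mX), (∀ᵐ x ∂μ, x ∈ D) → ∀ (E F : Set X),
      ∫⁻ x in E, ρ x F ∂μ = ∫⁻ x in E, π x F ∂μ := by
    intro μ hD E F
    refine lintegral_congr_ae (ae_restrict_of_ae ?_)
    filter_upwards [hD] with x hx
    rw [hρ_apply, Set.indicator_of_mem hx]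
  -- μ ∈ J(ρ) is concentrated on D
  have hconcρ : ∀ μ : @Measure X mX, μ ∈ J mX 𝓔 ρ → ∀ᵐ x ∂μ, x ∈ D := by
    rintro μ ⟨hP, hμ⟩
    haveI := hP
    have h1 : (1 : ℝ≥0∞) = ∫⁻ x in Set.univ, ρ x Set.univ ∂μ := by
      rw [← hμ Set.univ Set.univ MeasurableSet.univ MeasurableSet.univ, Set.univ_inter,
        measure_univ]
    have h2 : ∫⁻ x in Set.univ, ρ x Set.univ ∂μ ≤ μ D := by
      rw [Measure.restrict_univ]
      calc ∫⁻ x, ρ x Set.univ ∂μ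
          = ∫⁻ x, Set.indicator D (fun y => π y Set.univ) x ∂μ := by
            refine lintegral_congr fun x => ?_; rw [hρ_apply]
        _ = ∫⁻ x in D, π x Set.univ ∂μ := lintegral_indicator hDm _
        _ ≤ ∫⁻ _ in D, 1 ∂μ := lintegral_mono fun x => hle1 x _
        _ = μ D := by rw [lintegral_one, Measure.restrict_apply_univ]
    have hμD : μ D = 1 := le_antisymm prob_le_one (h1 ▸ h2)
    have hcompl : μ Dᶜ = 0 := by
      rw [measure_compl hDm (measure_ne_top μ D), hμD, measure_univ, tsub_self]
    rw [ae_iff]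
    exact hcompl
  -- J(ρ) = J(π)
  have hJ : J mX 𝓔 ρ = J mX 𝓔 π := by
    ext μ
    constructor
    · rintro hμJ
      obtain ⟨hP, hμ⟩ := hμJ
      have hD := hconcρ μ ⟨hP, hμ⟩
      exact ⟨hP, fun E F hE hF => by rw [hμ E F hE hF, hcongr μ hD E F]⟩
    · rintro hμJ
      obtain ⟨hP, hμ⟩ := hμJ
      have hD := hconc μ ⟨hP, hμ⟩
      exact ⟨hP, fun E F hE hF => by rw [hμ E F hE hF, ← hcongr μ hD E F]⟩
  refine ⟨ρ, ⟨⟨?_, ?_⟩, ?_, ⟨D, hDE, rfl⟩, hJ⟩, ?_⟩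
  · -- measurability of ρ(·,F)
    intro F hF
    have : (fun x => ρ x F) = Set.indicator D (fun y => π y F) := funext fun x => hρ_apply x F
    rw [this]
    exact (hπ.1 F hF).indicator hDm
  · -- mass 0 or 1
    intro x
    by_cases hx : x ∈ D
    · exact Or.inr (by rw [hρ_apply, Set.indicator_of_mem hx]; exact hDsupp hx)
    · exact Or.inl (by rw [hρ_apply, Set.indicator_of_notMem hx])
  · -- 𝓔-measurability
    intro F hF
    have : (fun x => ρ x F) = Set.indicator D (fun y => π y F) := funext fun x => hρ_apply x F
    rw [this]
    exact (hπE F hF).indicator hDE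
  · -- properness
    intro E F hE hF x
    by_cases hxD : x ∈ D
    · have hπE' := hKey x hxD E hE
      rw [hρ_apply]
      rw [Set.indicator_of_mem hxD]
      by_cases hxE : x ∈ E
      · rw [Set.indicator_of_mem hxE, hρ_apply, Set.indicator_of_mem hxD]
        have hEc : π x Eᶜ = 0 := by
          rw [measure_compl (h𝓔 _ hE) (ne_top_of_le_ne_top ENNReal.one_ne_top (hle1 x E)),
            (hDsupp hxD : π x Set.univ = 1),
            hπE', Set.indicator_of_mem hxE, tsub_self]
        refine le_antisymm (measure_mono Set.inter_subset_right) ?_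
        have hsub : F ⊆ (E ∩ F) ∪ (Eᶜ ∩ F) := by
          intro y hy
          by_cases hyE : y ∈ E
          · exact Or.inl ⟨hyE, hy⟩
          · exact Or.inr ⟨hyE, hy⟩
        calc π x F ≤ π x ((E ∩ F) ∪ (Eᶜ ∩ F)) := measure_mono hsub
          _ ≤ π x (E ∩ F) + π x (Eᶜ ∩ F) := measure_union_le _ _
          _ ≤ π x (E ∩ F) + π x Eᶜ := by gcongr; exact Set.inter_subset_left
          _ = π x (E ∩ F) := by rw [hEc, add_zero]
      · rw [Set.indicator_of_notMem hxE]
        have h0 : π x E = 0 := by rw [hπE', Set.indicator_of_notMem hxE]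
        exact le_antisymm (h0 ▸ measure_mono Set.inter_subset_left) zero_le
    · rw [hρ_apply, Set.indicator_of_notMem hxD]
      by_cases hxE : x ∈ E
      · rw [Set.indicator_of_mem hxE, hρ_apply, Set.indicator_of_notMem hxD]
      · rw [Set.indicator_of_notMem hxE]
end

section
/- Let π be an 𝓔-measurable quasi-probability kernel and μ ∈ J_𝓔(π). Then μ(Δ^π_μ) = 1 if and only if μ is trivial on 𝓔. -/
open MeasureTheory
open scoped ENNReal

variable {X : Type*}

/-- If `μ{g ≤ t} = 1` for all `t > c` and `μ{g ≤ t} = 0` for all `t < c`, then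
`μ{g = c} = 1`. -/
private lemma aux_conc {mX : MeasurableSpace X} {μ : @Measure X mX}
    (hprob : IsProbabilityMeasure μ) {g : X → ℝ≥0∞} (hg : Measurable[mX] g) {c : ℝ≥0∞}
    (h1 : ∀ t, c < t → μ {x | g x ≤ t} = 1)
    (h0 : ∀ t, t < c → μ {x | g x ≤ t} = 0) :
    μ {x | g x = c} = 1 := by
  have hgt : μ {x | c < g x} = 0 := by
    have hsub : {x | c < g x} ⊆ ⋃ q : ℚ,
        {x | c < (Real.toNNReal q : ℝ≥0∞) ∧ (Real.toNNReal q : ℝ≥0∞) < g x} := by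
      intro x hx
      rcases ENNReal.lt_iff_exists_rat_btwn.1 hx with ⟨q, _, hcq, hqg⟩
      exact Set.mem_iUnion.2 ⟨q, hcq, hqg⟩
    refine measure_mono_null hsub (measure_iUnion_null fun q => ?_)
    by_cases hq : c < (Real.toNNReal q : ℝ≥0∞)
    · have hcompl : μ {x | g x ≤ (Real.toNNReal q : ℝ≥0∞)}ᶜ = 0 := by
        rw [measure_compl (measurableSet_le hg measurable_const) (measure_ne_top _ _),
          hprob.measure_univ, h1 _ hq, tsub_self]
      refine measure_mono_null (fun x hx => ?_) hcompl
      exact not_le.2 hx.2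
    · have : {x | c < (Real.toNNReal q : ℝ≥0∞) ∧ (Real.toNNReal q : ℝ≥0∞) < g x}
          = (∅ : Set X) := by
        ext x; simp only [Set.mem_setOf_eq, Set.mem_empty_iff_false, iff_false, not_and]
        exact fun h => absurd h hq
      rw [this, measure_empty]
  have hlt : μ {x | g x < c} = 0 := by
    have hsub : {x | g x < c} ⊆ ⋃ q : ℚ,
        {x | g x ≤ (Real.toNNReal q : ℝ≥0∞) ∧ (Real.toNNReal q : ℝ≥0∞) < c} := by
      intro x hx
      rcases ENNReal.lt_iff_exists_rat_btwn.1 hx with ⟨q, _, hgq, hqc⟩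
      exact Set.mem_iUnion.2 ⟨q, hgq.le, hqc⟩
    refine measure_mono_null hsub (measure_iUnion_null fun q => ?_)
    by_cases hq : (Real.toNNReal q : ℝ≥0∞) < c
    · exact measure_mono_null (fun x hx => hx.1) (h0 _ hq)
    · have : {x | g x ≤ (Real.toNNReal q : ℝ≥0∞) ∧ (Real.toNNReal q : ℝ≥0∞) < c}
          = (∅ : Set X) := by
        ext x; simp only [Set.mem_setOf_eq, Set.mem_empty_iff_false, iff_false, not_and]
        exact fun _ h => absurd h hq
      rw [this, measure_empty]
  have hbig : μ Set.univ ≤ μ {x | g x = c} + μ ({x | g x < c} ∪ {x | c < g x}) := by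
    refine (measure_mono fun x _ => ?_).trans (measure_union_le _ _)
    rcases lt_trichotomy (g x) c with h | h | h
    · exact Or.inr (Or.inl h)
    · exact Or.inl h
    · exact Or.inr (Or.inr h)
  rw [hprob.measure_univ, measure_union_null hlt hgt, add_zero] at hbig
  exact le_antisymm prob_le_one hbig


/-- for `μ ∈ J_𝓔(π)`, `μ(Δ^π_μ) = 1` iff `μ` is trivial on `𝓔`. -/
theorem stmt5 (mX : MeasurableSpace X) (hCG : @MeasurableSpace.CountablyGenerated X mX)
    (𝓔 : MeasurableSpace X) (h𝓔 : 𝓔 ≤ mX)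
    (π : X → @Measure X mX) (hπ : IsQPK mX π) (hπE : EMeasK mX 𝓔 π)
    (μ : @Measure X mX) (hμ : μ ∈ J mX 𝓔 π) :
    μ (DeltaM mX π μ) = 1 ↔ IsTrivialOn mX 𝓔 μ := by
  obtain ⟨hprob, hJ⟩ := hμ
  haveI := hprob
  obtain ⟨b, hbc, hbgen⟩ := hCG.isCountablyGenerated
  set C : Set (Set X) := Set.sInter '' {T : Set (Set X) | T.Finite ∧ T ⊆ b} with hC
  have hCc : C.Countable := (Set.countable_setOf_finite_subset hbc).image _
  have hCpi : IsPiSystem C := by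
    rintro s ⟨T1, ⟨hT1f, hT1b⟩, rfl⟩ t ⟨T2, ⟨hT2f, hT2b⟩, rfl⟩ _
    exact ⟨T1 ∪ T2, ⟨hT1f.union hT2f, Set.union_subset hT1b hT2b⟩, Set.sInter_union T1 T2⟩
  have hbsubC : b ⊆ C := fun s hs =>
    ⟨{s}, ⟨Set.finite_singleton s, Set.singleton_subset_iff.2 hs⟩, Set.sInter_singleton s⟩
  have hCmeas : ∀ s ∈ C, MeasurableSet[mX] s := by
    rintro s ⟨T, ⟨hTf, hTb⟩, rfl⟩
    refine MeasurableSet.sInter hTf.countable fun t ht => ?_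
    rw [hbgen]
    exact MeasurableSpace.measurableSet_generateFrom (hTb ht)
  have hCgen : mX = MeasurableSpace.generateFrom C := by
    refine le_antisymm ?_ (MeasurableSpace.generateFrom_le hCmeas)
    conv_lhs => rw [hbgen]
    exact MeasurableSpace.generateFrom_mono hbsubC
  set A : Set X := {x | π x Set.univ = 1} ∩ ⋂ s ∈ C, {x | π x s = μ s} with hA
  have hAmE : MeasurableSet[𝓔] A := by
    refine MeasurableSet.inter ?_ (MeasurableSet.biInter hCc fun s hs => ?_)
    · exact hπE Set.univ MeasurableSet.univ (measurableSet_singleton 1)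
    · exact hπE s (hCmeas s hs) (measurableSet_singleton (μ s))
  have hAeq : DeltaM mX π μ = A := by
    ext x
    simp only [DeltaM, qpkSupp, Set.mem_setOf_eq, hA, Set.mem_inter_iff, Set.mem_iInter]
    constructor
    · rintro ⟨h1, h2⟩
      exact ⟨h1, fun s _ => by rw [h2]⟩
    · rintro ⟨h1, h2⟩
      refine ⟨h1, ?_⟩
      haveI : IsFiniteMeasure (π x) :=
        ⟨by rw [h1]; exact ENNReal.one_lt_top⟩
      refine ext_of_generate_finite C hCgen hCpi (fun s hs => h2 s hs) ?_
      rw [h1, hprob.measure_univ]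
  rw [hAeq]
  constructor
  · -- μ A = 1 → trivial
    intro hΔ E hE
    have hAm : MeasurableSet[mX] A := h𝓔 A hAmE
    have hAc : μ Aᶜ = 0 := by
      rw [measure_compl hAm (measure_ne_top _ _), hprob.measure_univ, hΔ, tsub_self]
    have hae : ∀ᵐ x ∂μ, π x = μ := by
      rw [ae_iff]
      refine measure_mono_null ?_ hAc
      intro x hx hxA
      have hxD : x ∈ DeltaM mX π μ := by rw [hAeq]; exact hxA
      exact hx hxD.2
    have h1 : μ (E ∩ E) = ∫⁻ x in E, π x E ∂μ := hJ E E hE (h𝓔 E hE)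
    rw [Set.inter_self] at h1
    have h2 : ∫⁻ x in E, π x E ∂μ = ∫⁻ _ in E, μ E ∂μ :=
      lintegral_congr_ae ((ae_restrict_of_ae (hae.mono fun x hx => by simp only [hx])))
    rw [h2, setLIntegral_const] at h1
    by_cases h0 : μ E = 0
    · exact Or.inl h0
    · exact Or.inr ((ENNReal.mul_right_inj h0 (measure_ne_top μ E)).1
        (by rw [mul_one]; exact h1)).symm
  · -- trivial → μ A = 1
    intro htriv
    have hS : μ {x | π x Set.univ = 1} = 1 := by
      have hSE : MeasurableSet[𝓔] {x | π x Set.univ = 1} :=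
        hπE Set.univ MeasurableSet.univ (measurableSet_singleton 1)
      rcases htriv _ hSE with h0 | h1
      · exfalso
        have hint : μ Set.univ = ∫⁻ x, π x Set.univ ∂μ := by
          have := hJ Set.univ Set.univ MeasurableSet.univ MeasurableSet.univ
          rwa [Set.univ_inter, Measure.restrict_univ] at this
        have hz : ∫⁻ x, π x Set.univ ∂μ = 0 := by
          rw [lintegral_eq_zero_iff (hπ.1 Set.univ MeasurableSet.univ)]
          rw [Filter.EventuallyEq, ae_iff]
          refine measure_mono_null (fun x hx => ?_) h0
          rcases hπ.2 x with h | h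
          · exact absurd h hx
          · exact h
        have h2 := hprob.measure_univ
        rw [hint, hz] at h2
        exact zero_ne_one h2
      · exact h1
    have hG : ∀ s ∈ C, μ {x | π x s = μ s} = 1 := by
      intro s hs
      have hsm : MeasurableSet[mX] s := hCmeas s hs
      have hEtE : ∀ t : ℝ≥0∞, MeasurableSet[𝓔] {x | π x s ≤ t} := fun t =>
        measurableSet_le (hπE s hsm) measurable_const
      have ha : ∀ t : ℝ≥0∞, μ {x | π x s ≤ t} = 1 → μ s ≤ t := by
        intro t h1
        have hcompl : μ {x | π x s ≤ t}ᶜ = 0 := by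
          rw [measure_compl (h𝓔 _ (hEtE t)) (measure_ne_top _ _), hprob.measure_univ, h1,
            tsub_self]
        have hms : μ s ≤ μ ({x | π x s ≤ t} ∩ s) := by
          calc μ s ≤ μ (({x | π x s ≤ t} ∩ s) ∪ {x | π x s ≤ t}ᶜ) := by
                refine measure_mono fun x hx => ?_
                by_cases hxt : π x s ≤ t
                · exact Or.inl ⟨hxt, hx⟩
                · exact Or.inr hxt
            _ ≤ μ ({x | π x s ≤ t} ∩ s) + μ {x | π x s ≤ t}ᶜ := measure_union_le _ _
            _ = μ ({x | π x s ≤ t} ∩ s) := by rw [hcompl, add_zero]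
        calc μ s ≤ μ ({x | π x s ≤ t} ∩ s) := hms
          _ = ∫⁻ x in {x | π x s ≤ t}, π x s ∂μ := hJ _ s (hEtE t) hsm
          _ ≤ ∫⁻ _ in {x | π x s ≤ t}, t ∂μ :=
              setLIntegral_mono' (h𝓔 _ (hEtE t)) fun x hx => hx
          _ = t * μ {x | π x s ≤ t} := setLIntegral_const _ _
          _ ≤ t * 1 := mul_le_mul_right prob_le_one _
          _ = t := mul_one t
      have hb : ∀ t : ℝ≥0∞, μ {x | π x s ≤ t} = 0 → t ≤ μ s := by
        intro t h0
        have hcompl : μ {x | π x s ≤ t}ᶜ = 1 := by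
          rw [measure_compl (h𝓔 _ (hEtE t)) (measure_ne_top _ _), hprob.measure_univ, h0,
            tsub_zero]
        calc t = t * μ {x | π x s ≤ t}ᶜ := by rw [hcompl, mul_one]
          _ = ∫⁻ _ in {x | π x s ≤ t}ᶜ, t ∂μ := (setLIntegral_const _ _).symm
          _ ≤ ∫⁻ x in {x | π x s ≤ t}ᶜ, π x s ∂μ :=
              setLIntegral_mono' (h𝓔 _ (hEtE t)).compl fun x hx => le_of_not_ge fun h => hx h
          _ = μ ({x | π x s ≤ t}ᶜ ∩ s) := (hJ _ s (hEtE t).compl hsm).symm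
          _ ≤ μ s := measure_mono Set.inter_subset_right
      refine aux_conc hprob ((hπE s hsm).mono h𝓔 le_rfl) (fun t ht => ?_) (fun t ht => ?_)
      · rcases htriv _ (hEtE t) with h0 | h1
        · exact absurd (hb t h0) (not_le.2 ht)
        · exact h1
      · rcases htriv _ (hEtE t) with h0 | h1
        · exact h0
        · exact absurd (ha t h1) (not_le.2 ht)
    have hAc : μ Aᶜ = 0 := by
      have hsub : Aᶜ ⊆ {x | π x Set.univ = 1}ᶜ ∪ ⋃ s ∈ C, {x | π x s = μ s}ᶜ := by
        intro x hx
        rw [hA, Set.compl_inter] at hx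
        rcases hx with hx | hx
        · exact Or.inl hx
        · right
          simp only [Set.mem_compl_iff, Set.mem_iInter, not_forall] at hx
          obtain ⟨s, hs, hxs⟩ := hx
          exact Set.mem_biUnion hs hxs
      refine measure_mono_null hsub (measure_union_null ?_ ?_)
      · have hm1 : MeasurableSet[mX] {x | π x Set.univ = 1} :=
          h𝓔 _ (hπE Set.univ MeasurableSet.univ (measurableSet_singleton 1))
        rw [measure_compl hm1 (measure_ne_top _ _), hprob.measure_univ, hS, tsub_self]
      · rw [measure_biUnion_null_iff hCc]
        intro s hs
        have hm2 : MeasurableSet[mX] {x | π x s = μ s} :=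
          h𝓔 _ (hπE s (hCmeas s hs) (measurableSet_singleton (μ s)))
        rw [measure_compl hm2 (measure_ne_top _ _), hprob.measure_univ, hG s hs, tsub_self]
    have := measure_compl (h𝓔 A hAmE) (measure_ne_top μ A)
    rw [hAc, hprob.measure_univ] at this
    exact le_antisymm prob_le_one (tsub_eq_zero_iff_le.1 this.symm)
end

section
/- Let π be an 𝓔-measurable quasi-probability kernel. If μ ∈ J_𝓔(π) is trivial on 𝓔, then μ = π(x,·) for some x ∈ S_π. -/
open MeasureTheory
open scoped ENNReal

variable {X : Type*}

lemma countable_generatePiSystem {α : Type*} {b : Set (Set α)} (hb : b.Countable) :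
    (generatePiSystem b).Countable := by
  have h : generatePiSystem b ⊆
      (fun t : Set (Set α) => ⋂₀ t) '' {t | t.Finite ∧ t ⊆ b} := by
    intro s hs
    induction hs with
    | base h =>
      exact ⟨{_}, ⟨Set.finite_singleton _, Set.singleton_subset_iff.2 h⟩,
        Set.sInter_singleton _⟩
    | inter hs ht _ ihs iht =>
      obtain ⟨u, ⟨hu1, hu2⟩, rfl⟩ := ihs
      obtain ⟨v, ⟨hv1, hv2⟩, rfl⟩ := iht
      exact ⟨u ∪ v, ⟨hu1.union hv1, Set.union_subset hu2 hv2⟩,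
        (by simp [Set.sInter_union])⟩
  exact ((Set.countable_setOf_finite_subset hb).image _).mono h

/-- if `μ ∈ J_𝓔(π)` is trivial on `𝓔` then `μ = π(x,·)` for some
`x ∈ S_π`. -/
theorem stmt6 (mX : MeasurableSpace X) (hCG : @MeasurableSpace.CountablyGenerated X mX)
    (𝓔 : MeasurableSpace X) (h𝓔 : 𝓔 ≤ mX)
    (π : X → @Measure X mX) (hπ : IsQPK mX π) (hπE : EMeasK mX 𝓔 π)
    (μ : @Measure X mX) (hμ : μ ∈ J mX 𝓔 π) (htriv : IsTrivialOn mX 𝓔 μ) :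
    ∃ x ∈ qpkSupp mX π, μ = π x := by
  obtain ⟨hprob, hJ⟩ := hμ
  haveI : IsProbabilityMeasure μ := hprob
  have key : ∀ F : Set X, MeasurableSet[mX] F → μ {x | π x F ≠ μ F} = 0 := by
    intro F hF
    have hmeasE : Measurable[𝓔] fun x => π x F := hπE F hF
    have hmeasX : Measurable[mX] fun x => π x F := hmeasE.mono h𝓔 le_rfl
    have h1 : ∀ q : ℝ≥0∞, μ F < q → μ {x | q ≤ π x F} = 0 := by
      intro q hq
      have hE : MeasurableSet[𝓔] {x | q ≤ π x F} := by
        letI := 𝓔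
        exact measurableSet_le measurable_const hmeasE
      rcases htriv _ hE with h0 | h1
      · exact h0
      · exfalso
        have heq := hJ _ F hE hF
        have hle : q * μ {x | q ≤ π x F} ≤ ∫⁻ x in {x | q ≤ π x F}, π x F ∂μ := by
          rw [← setLIntegral_const]
          exact setLIntegral_mono hmeasX fun x hx => hx
        rw [h1, mul_one] at hle
        have hmono : μ ({x | q ≤ π x F} ∩ F) ≤ μ F := measure_mono Set.inter_subset_right
        rw [heq] at hmono
        exact absurd (hq.trans_le (hle.trans hmono)) (lt_irrefl _)
    have h2 : ∀ q : ℝ≥0∞, q < μ F → μ {x | π x F ≤ q} = 0 := by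
      intro q hq
      have hE : MeasurableSet[𝓔] {x | π x F ≤ q} := by
        letI := 𝓔
        exact measurableSet_le hmeasE measurable_const
      rcases htriv _ hE with h0 | h1
      · exact h0
      · exfalso
        have heq := hJ _ F hE hF
        have hle : ∫⁻ x in {x | π x F ≤ q}, π x F ∂μ ≤ q * μ {x | π x F ≤ q} := by
          rw [← setLIntegral_const]
          exact setLIntegral_mono measurable_const fun x hx => hx
        rw [h1, mul_one] at hle
        have hcompl : μ {x | π x F ≤ q}ᶜ = 0 :=
          (prob_compl_eq_zero_iff (h𝓔 _ hE)).2 h1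
        have hge : μ F ≤ μ ({x | π x F ≤ q} ∩ F) := by
          calc μ F ≤ μ (F ∩ {x | π x F ≤ q}) + μ (F \ {x | π x F ≤ q}) :=
                measure_le_inter_add_diff μ F _
            _ ≤ μ ({x | π x F ≤ q} ∩ F) + μ {x | π x F ≤ q}ᶜ := by
                rw [Set.inter_comm]
                exact add_le_add le_rfl (measure_mono fun y hy => hy.2)
            _ = μ ({x | π x F ≤ q} ∩ F) := by rw [hcompl, add_zero]
        rw [heq] at hge
        exact absurd ((hge.trans hle).trans_lt hq) (lt_irrefl _)
    have hgt : μ {x | μ F < π x F} = 0 := by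
      have hsub : {x | μ F < π x F} ⊆
          ⋃ q : ℚ, {x | μ F < (Real.toNNReal q : ℝ≥0∞)} ∩
            {x | (Real.toNNReal q : ℝ≥0∞) ≤ π x F} := by
        intro x hx
        obtain ⟨q, _, h1q, h2q⟩ := ENNReal.lt_iff_exists_rat_btwn.1 hx
        exact Set.mem_iUnion.2 ⟨q, h1q, h2q.le⟩
      refine measure_mono_null hsub (measure_iUnion_null fun q => ?_)
      by_cases hq : μ F < (Real.toNNReal q : ℝ≥0∞)
      · exact measure_mono_null Set.inter_subset_right (h1 _ hq)
      · have hempty : {x : X | μ F < (Real.toNNReal q : ℝ≥0∞)} = ∅ := by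
          simp [Set.eq_empty_iff_forall_notMem, hq]
        simp [hempty]
    have hlt : μ {x | π x F < μ F} = 0 := by
      have hsub : {x | π x F < μ F} ⊆
          ⋃ q : ℚ, {x | π x F ≤ (Real.toNNReal q : ℝ≥0∞)} ∩
            {x | (Real.toNNReal q : ℝ≥0∞) < μ F} := by
        intro x hx
        obtain ⟨q, _, h1q, h2q⟩ := ENNReal.lt_iff_exists_rat_btwn.1 hx
        exact Set.mem_iUnion.2 ⟨q, h1q.le, h2q⟩
      refine measure_mono_null hsub (measure_iUnion_null fun q => ?_)
      by_cases hq : (Real.toNNReal q : ℝ≥0∞) < μ F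
      · exact measure_mono_null Set.inter_subset_left (h2 _ hq)
      · have hempty : {x : X | (Real.toNNReal q : ℝ≥0∞) < μ F} = ∅ := by
          simp [Set.eq_empty_iff_forall_notMem, hq]
        simp [hempty]
    have hsub : {x | π x F ≠ μ F} ⊆ {x | π x F < μ F} ∪ {x | μ F < π x F} :=
      fun x hx => (lt_or_gt_of_ne hx).imp id id
    exact measure_mono_null hsub (measure_union_null hlt hgt)
  obtain ⟨b, hbc, hbgen⟩ := hCG.isCountablyGenerated
  set S := generatePiSystem b with hSdef
  have hSc : S.Countable := countable_generatePiSystem hbc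
  have hSmeas : ∀ s ∈ S, MeasurableSet[mX] s := fun s hs => by
    rw [hbgen]; exact generateFrom_measurableSet_of_generatePiSystem s hs
  set N := {x | π x Set.univ ≠ μ Set.univ} ∪ ⋃ s ∈ S, {x | π x s ≠ μ s} with hNdef
  have hN : μ N = 0 :=
    measure_union_null (key _ MeasurableSet.univ)
      ((measure_biUnion_null_iff hSc).2 fun s hs => key s (hSmeas s hs))
  have hne : Nᶜ.Nonempty := by
    rw [Set.nonempty_iff_ne_empty]
    intro hemp
    have h0 : μ Nᶜ = 0 := by rw [hemp]; exact measure_empty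
    have hle : (1 : ℝ≥0∞) ≤ 0 := by
      calc (1 : ℝ≥0∞) = μ Set.univ := measure_univ.symm
        _ = μ (N ∪ Nᶜ) := by rw [Set.union_compl_self]
        _ ≤ μ N + μ Nᶜ := measure_union_le _ _
        _ = 0 := by rw [hN, h0, add_zero]
    simp at hle
  obtain ⟨x, hx⟩ := hne
  rw [Set.mem_compl_iff, hNdef, Set.mem_union, not_or] at hx
  obtain ⟨hx1, hx2⟩ := hx
  simp only [Set.mem_setOf_eq, not_not] at hx1
  have hx2' : ∀ s ∈ S, π x s = μ s := by
    intro s hs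
    by_contra h
    exact hx2 (Set.mem_biUnion hs h)
  have hxsupp : x ∈ qpkSupp mX π := by
    show π x Set.univ = 1
    rw [hx1, measure_univ]
  refine ⟨x, hxsupp, ?_⟩
  refine ext_of_generate_finite S ?_ (isPiSystem_generatePiSystem b)
    (fun s hs => (hx2' s hs).symm) ?_
  · rw [hSdef, generateFrom_generatePiSystem_eq]; exact hbgen
  · rw [hx1]
end

section
/- An 𝓔-measurable quasi-probability kernel π is normal if and only if it is adapted and π(x, Δ^π_x) = 1 for all x ∈ S_π. -/
open MeasureTheory
open scoped ENNReal

variable {X : Type*}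

private lemma gps_countable {α : Type*} {S : Set (Set α)} (hS : S.Countable) :
    (generatePiSystem S).Countable := by
  have hsub : generatePiSystem S ⊆ Set.sInter '' {T | T.Finite ∧ T ⊆ S} := by
    intro t ht
    induction ht with
    | base h => exact ⟨{_}, ⟨Set.finite_singleton _, by simpa⟩, by simp⟩
    | inter hs ht hne ihs iht =>
      obtain ⟨T1, ⟨hT1f, hT1s⟩, rfl⟩ := ihs
      obtain ⟨T2, ⟨hT2f, hT2s⟩, rfl⟩ := iht
      exact ⟨T1 ∪ T2, ⟨hT1f.union hT2f, Set.union_subset hT1s hT2s⟩, by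
        simp [Set.sInter_union]⟩
  exact ((Set.countable_setOf_finite_subset hS).image _).mono hsub

private lemma supp_emeas (mX 𝓔 : MeasurableSpace X) (π : X → @Measure X mX)
    (hπE : ∀ F : Set X, MeasurableSet[mX] F → Measurable[𝓔] fun x => π x F) :
    MeasurableSet[𝓔] {x | π x Set.univ = 1} := by
  have : {x | π x Set.univ = 1} = (fun x => π x Set.univ) ⁻¹' {1} := rfl
  rw [this]
  exact hπE Set.univ MeasurableSet.univ (measurableSet_singleton 1)

private lemma supp_full (mX 𝓔 : MeasurableSpace X) (h𝓔 : 𝓔 ≤ mX)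
    (π : X → @Measure X mX)
    (hπ : ∀ x : X, π x Set.univ = 0 ∨ π x Set.univ = 1)
    (hπE : ∀ F : Set X, MeasurableSet[mX] F → Measurable[𝓔] fun x => π x F)
    (x : X) (hx : π x Set.univ = 1)
    (hJx : ∀ E F : Set X, MeasurableSet[𝓔] E → MeasurableSet[mX] F →
      π x (E ∩ F) = ∫⁻ y in E, π y F ∂(π x)) :
    π x {y | π y Set.univ = 1} = 1 := by
  set S : Set X := {y | π y Set.univ = 1} with hS
  have hS𝓔 : MeasurableSet[𝓔] S := supp_emeas mX 𝓔 π hπE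
  have hcompl : π x Sᶜ = 0 := by
    have h1 : π x (Sᶜ ∩ Set.univ) = ∫⁻ y in Sᶜ, π y Set.univ ∂(π x) :=
      hJx Sᶜ Set.univ hS𝓔.compl MeasurableSet.univ
    have h2 : ∫⁻ y in Sᶜ, π y Set.univ ∂(π x) = ∫⁻ _ in Sᶜ, (0 : ℝ≥0∞) ∂(π x) := by
      refine setLIntegral_congr_fun (h𝓔 _ hS𝓔.compl) ?_
      intro y hy
      rcases hπ y with h | h
      · exact h
      · exact absurd h hy
    rw [Set.inter_univ] at h1
    rw [h1, h2, lintegral_zero]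
  have hle : π x S ≤ 1 := by
    rw [← hx]; exact measure_mono (Set.subset_univ _)
  have hge : (1 : ℝ≥0∞) ≤ π x S := by
    calc (1 : ℝ≥0∞) = π x Set.univ := hx.symm
    _ ≤ π x (S ∪ Sᶜ) := measure_mono (by rw [Set.union_compl_self])
    _ ≤ π x S + π x Sᶜ := measure_union_le _ _
    _ = π x S := by rw [hcompl, add_zero]
  exact le_antisymm hle hge

private lemma agree_aux (mX 𝓔 : MeasurableSpace X) (h𝓔 : 𝓔 ≤ mX)
    (π : X → @Measure X mX)
    (hπE : ∀ F : Set X, MeasurableSet[mX] F → Measurable[𝓔] fun x => π x F)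
    (x : X) (hx : π x Set.univ = 1)
    (hJx : ∀ E F : Set X, MeasurableSet[𝓔] E → MeasurableSet[mX] F →
      π x (E ∩ F) = ∫⁻ y in E, π y F ∂(π x))
    (htriv : ∀ E : Set X, MeasurableSet[𝓔] E → π x E = 0 ∨ π x E = 1)
    (F : Set X) (hF : MeasurableSet[mX] F) :
    π x {y | π y F = π x F} = 1 := by
  set μ := π x with hμdef
  set c := π x F with hcdef
  set g : X → ℝ≥0∞ := fun y => π y F with hgdef
  have hgE : Measurable[𝓔] g := hπE F hF
  have hgX : Measurable[mX] g := fun s hs => h𝓔 _ (hgE hs)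
  have hc_le : c ≤ 1 := by rw [← hx]; exact measure_mono (Set.subset_univ _)
  have hc_ne : c ≠ ∞ := (lt_of_le_of_lt hc_le ENNReal.one_lt_top).ne
  -- if D ∈ 𝓔 has full measure, then ∫_D g = c
  have hint : ∀ D : Set X, MeasurableSet[𝓔] D → μ D = 1 →
      ∫⁻ y in D, g y ∂μ = c := by
    intro D hD hD1
    have hDc : μ Dᶜ = 0 := by
      have := measure_compl (μ := μ) (h𝓔 _ hD) (by rw [hD1]; exact ENNReal.one_ne_top)
      rw [hD1, hx] at this
      simpa using this
    have h1 : μ (D ∩ F) = c := by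
      refine le_antisymm (measure_mono Set.inter_subset_right) ?_
      calc c = μ F := rfl
      _ ≤ μ ((D ∩ F) ∪ Dᶜ) := measure_mono (fun y hy => by
          by_cases h : y ∈ D
          · exact Or.inl ⟨h, hy⟩
          · exact Or.inr h)
      _ ≤ μ (D ∩ F) + μ Dᶜ := measure_union_le _ _
      _ = μ (D ∩ F) := by rw [hDc, add_zero]
    rw [← h1]
    exact (hJx D F hD hF).symm
  -- the set where g > c has measure 0
  have hA : μ {y | c < g y} = 0 := by
    set A := {y | c < g y} with hAdef
    have hA𝓔 : MeasurableSet[𝓔] A := hgE measurableSet_Ioi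
    have hAmX : MeasurableSet[mX] A := h𝓔 _ hA𝓔
    rcases htriv A hA𝓔 with h | h
    · exact h
    · exfalso
      have hintA : ∫⁻ y in A, g y ∂μ = c := hint A hA𝓔 h
      have hconst : ∫⁻ _ in A, c ∂μ = c := by
        rw [setLIntegral_const, h, mul_one]
      have hle : (fun _ : X => c) ≤ᵐ[μ.restrict A] g :=
        (ae_restrict_iff' hAmX).2 (Filter.Eventually.of_forall fun y hy => le_of_lt hy)
      have hsub : ∫⁻ y in A, (g y - c) ∂μ = 0 := by
        rw [@lintegral_sub X mX (μ.restrict A) _ _ measurable_const (by rw [hconst]; exact hc_ne) hle,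
          hintA, hconst, tsub_self]
      have hae := (setLIntegral_eq_zero_iff hAmX (hgX.sub measurable_const)).1 hsub
      have hsubset : A ⊆ {y | ¬ (g y - c = 0 )} := by
        intro y hy
        simp only [Set.mem_setOf_eq, tsub_eq_zero_iff_le]
        exact not_le.2 hy
      have h0 : μ A = 0 := by
        refine measure_mono_null ?_ (ae_iff.1 hae)
        intro y hy
        simp only [Set.mem_setOf_eq, Classical.not_imp]
        exact ⟨hy, hsubset hy⟩
      rw [h] at h0
      exact one_ne_zero h0
  -- the set where g < c has measure 0
  have hB : μ {y | g y < c} = 0 := by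
    set B := {y | g y < c} with hBdef
    have hB𝓔 : MeasurableSet[𝓔] B := hgE measurableSet_Iio
    have hBmX : MeasurableSet[mX] B := h𝓔 _ hB𝓔
    rcases htriv B hB𝓔 with h | h
    · exact h
    · exfalso
      have hintB : ∫⁻ y in B, g y ∂μ = c := hint B hB𝓔 h
      have hconst : ∫⁻ _ in B, c ∂μ = c := by
        rw [setLIntegral_const, h, mul_one]
      have hle : g ≤ᵐ[μ.restrict B] (fun _ : X => c) :=
        (ae_restrict_iff' hBmX).2 (Filter.Eventually.of_forall fun y hy => le_of_lt hy)
      have hsub : ∫⁻ y in B, (c - g y) ∂μ = 0 := by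
        rw [@lintegral_sub X mX (μ.restrict B) _ _ hgX (by rw [hintB]; exact hc_ne) hle,
          hintB, hconst, tsub_self]
      have hae := (setLIntegral_eq_zero_iff hBmX (measurable_const.sub hgX)).1 hsub
      have hsubset : B ⊆ {y | ¬ (c - g y = 0)} := by
        intro y hy
        simp only [Set.mem_setOf_eq, tsub_eq_zero_iff_le]
        exact not_le.2 hy
      have h0 : μ B = 0 := by
        refine measure_mono_null ?_ (ae_iff.1 hae)
        intro y hy
        simp only [Set.mem_setOf_eq, Classical.not_imp]
        exact ⟨hy, hsubset hy⟩
      rw [h] at h0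
      exact one_ne_zero h0
  -- conclude
  have hcover : Set.univ ⊆ {y | g y = c} ∪ ({y | c < g y} ∪ {y | g y < c}) := by
    intro y _
    rcases lt_trichotomy (g y) c with h | h | h
    · exact Or.inr (Or.inr h)
    · exact Or.inl h
    · exact Or.inr (Or.inl h)
  have hle1 : μ {y | g y = c} ≤ 1 := by
    rw [← hx]; exact measure_mono (Set.subset_univ _)
  have hge1 : (1 : ℝ≥0∞) ≤ μ {y | g y = c} := by
    calc (1 : ℝ≥0∞) = μ Set.univ := hx.symm
    _ ≤ μ ({y | g y = c} ∪ ({y | c < g y} ∪ {y | g y < c})) := measure_mono hcover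
    _ ≤ μ {y | g y = c} + μ ({y | c < g y} ∪ {y | g y < c}) := measure_union_le _ _
    _ = μ {y | g y = c} := by
        rw [measure_union_null_iff.2 ⟨hA, hB⟩, add_zero]
  exact le_antisymm hle1 hge1

private lemma delta_repr (mX : MeasurableSpace X)
    (hCG : @MeasurableSpace.CountablyGenerated X mX) (π : X → @Measure X mX) :
    ∃ C : Set (Set X), C.Countable ∧ (∀ F ∈ C, MeasurableSet[mX] F) ∧
      ∀ x : X, Delta mX π x =
        qpkSupp mX π ∩
          ({y | π y Set.univ = π x Set.univ} ∩ ⋂ F ∈ C, {y | π y F = π x F}) := by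
  obtain ⟨b, hbc, hbeq⟩ := hCG.isCountablyGenerated
  refine ⟨generatePiSystem b, gps_countable hbc, fun F hF => ?_, fun x => ?_⟩
  · rw [hbeq]
    exact generateFrom_measurableSet_of_generatePiSystem F hF
  · ext y
    simp only [Delta, qpkSupp, Set.mem_setOf_eq, Set.mem_inter_iff, Set.mem_iInter]
    constructor
    · rintro ⟨hyS, hyx⟩
      exact ⟨hyS, by rw [hyx], fun F hF => by rw [hyx]⟩
    · rintro ⟨hyS, huniv, hagree⟩
      refine ⟨hyS, ?_⟩
      haveI : IsFiniteMeasure (π y) :=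
        ⟨by rw [show (π y) Set.univ = 1 from hyS]; exact ENNReal.one_lt_top⟩
      refine ext_of_generate_finite (μ := π y) (ν := π x) (generatePiSystem b) ?_
        (isPiSystem_generatePiSystem b) hagree huniv
      rw [generateFrom_generatePiSystem_eq]
      exact hbeq

/-- `π` is normal iff it is adapted and `π(x, Δ^π_x) = 1` for all
`x ∈ S_π`. -/
theorem stmt7 (mX : MeasurableSpace X) (hCG : @MeasurableSpace.CountablyGenerated X mX)
    (𝓔 : MeasurableSpace X) (h𝓔 : 𝓔 ≤ mX)
    (π : X → @Measure X mX) (hπ : IsQPK mX π) (hπE : EMeasK mX 𝓔 π) :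
    IsNormalK mX 𝓔 π ↔
      (IsAdaptedK mX 𝓔 π ∧ ∀ x ∈ qpkSupp mX π, π x (Delta mX π x) = 1) := by
  obtain ⟨C, hCc, hCm, hCrepr⟩ := delta_repr mX hCG π
  have hSmeas : MeasurableSet[𝓔] (qpkSupp mX π) := supp_emeas mX 𝓔 π hπE
  have hUmeas : ∀ x : X, MeasurableSet[𝓔] {y | π y Set.univ = π x Set.univ} := fun x =>
    hπE Set.univ MeasurableSet.univ (measurableSet_singleton _)
  have hFmeas : ∀ x : X, ∀ F ∈ C, MeasurableSet[𝓔] {y | π y F = π x F} := fun x F hF =>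
    hπE F (hCm F hF) (measurableSet_singleton _)
  have hΔmeas : ∀ x : X, MeasurableSet[𝓔] (Delta mX π x) := by
    intro x
    rw [hCrepr x]
    exact hSmeas.inter ((hUmeas x).inter
      (MeasurableSet.biInter hCc fun F hF => hFmeas x F hF))
  constructor
  · rintro ⟨hAd, htriv⟩
    refine ⟨hAd, fun x hx => ?_⟩
    have hx1 : π x Set.univ = 1 := hx
    have hJx := (hAd x hx).2
    haveI : IsProbabilityMeasure (π x) := ⟨hx1⟩
    have hfull : ∀ F : Set X, MeasurableSet[mX] F → π x {y | π y F = π x F} = 1 :=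
      fun F hF => agree_aux mX 𝓔 h𝓔 π hπE x hx1 hJx (htriv x hx) F hF
    have hS1 : π x (qpkSupp mX π) = 1 := supp_full mX 𝓔 h𝓔 π hπ.2 hπE x hx1 hJx
    have hnull : ∀ A : Set X, MeasurableSet[𝓔] A → π x A = 1 → π x Aᶜ = 0 := by
      intro A hA h1
      have := measure_compl (μ := π x) (h𝓔 _ hA) (measure_ne_top _ _)
      rw [h1, measure_univ] at this
      simpa using this
    have key : π x (qpkSupp mX π ∩
        ({y | π y Set.univ = π x Set.univ} ∩ ⋂ F ∈ C, {y | π y F = π x F}))ᶜ = 0 := by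
      rw [Set.compl_inter, Set.compl_inter, Set.compl_iInter₂]
      refine measure_union_null (hnull _ hSmeas hS1)
        (measure_union_null (hnull _ (hUmeas x) (hfull Set.univ MeasurableSet.univ)) ?_)
      exact (measure_biUnion_null_iff hCc).2 fun F hF =>
        hnull _ (hFmeas x F hF) (hfull F (hCm F hF))
    rw [hCrepr x]
    set T := qpkSupp mX π ∩
      ({y | π y Set.univ = π x Set.univ} ∩ ⋂ F ∈ C, {y | π y F = π x F}) with hT
    refine le_antisymm prob_le_one ?_
    calc (1 : ℝ≥0∞) = π x Set.univ := hx1.symm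
    _ ≤ π x (T ∪ Tᶜ) := measure_mono (by rw [Set.union_compl_self])
    _ ≤ π x T + π x Tᶜ := measure_union_le _ _
    _ = π x T := by rw [key, add_zero]
  · rintro ⟨hAd, hΔ⟩
    refine ⟨hAd, fun x hx E hE => ?_⟩
    have hx1 : π x Set.univ = 1 := hx
    haveI : IsProbabilityMeasure (π x) := ⟨hx1⟩
    have hJx := (hAd x hx).2
    have hEmX : MeasurableSet[mX] E := h𝓔 E hE
    have hΔc : π x (Delta mX π x)ᶜ = 0 := by
      have := measure_compl (μ := π x) (h𝓔 _ (hΔmeas x)) (measure_ne_top _ _)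
      rw [hΔ x hx, measure_univ] at this
      simpa using this
    have hae : ∀ᵐ y ∂(π x), π y E = π x E := by
      rw [ae_iff]
      refine measure_mono_null ?_ hΔc
      intro y hy
      simp only [Set.mem_compl_iff, Delta, Set.mem_setOf_eq, qpkSupp]
      intro hmem
      exact hy (by rw [hmem.2])
    have hcalc : π x E = π x E * π x E := by
      calc π x E = π x (E ∩ E) := by rw [Set.inter_self]
      _ = ∫⁻ y in E, π y E ∂(π x) := hJx E E hE hEmX
      _ = ∫⁻ _ in E, π x E ∂(π x) := lintegral_congr_ae (ae_restrict_of_ae hae)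
      _ = π x E * π x E := by rw [setLIntegral_const]
    rcases eq_or_ne (π x E) 0 with h0 | h0
    · exact Or.inl h0
    · refine Or.inr ?_
      have hne : π x E ≠ ∞ := measure_ne_top _ _
      have : π x E * π x E = π x E := hcalc.symm
      exact ((ENNReal.mul_eq_left h0 hne).1 this)
end

section
/- Let π be an 𝓔-measurable quasi-probability kernel with J_𝓔(π) = J_⋆(π). Then there exists a normal refinement ρ of π. -/
open MeasureTheory
open scoped ENNReal

variable {X : Type*}

section Stmt8Helpers

open ProbabilityTheory

set_option linter.unusedSectionVars false

variable {X : Type*} {𝓔 : MeasurableSpace X} [mX : MeasurableSpace X]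
  {π : X → @Measure X mX}

lemma stmt8_exists_pi [MeasurableSpace.CountablyGenerated X] :
    ∃ C : Set (Set X), C.Countable ∧ IsPiSystem C ∧ (∀ s ∈ C, MeasurableSet[mX] s) ∧
      MeasurableSpace.generateFrom C = mX := by
  obtain ⟨t, ht⟩ := (MeasurableSpace.countable_countableGeneratingSet (α := X)).exists_eq_range
    ⟨∅, MeasurableSpace.empty_mem_countableGeneratingSet⟩
  have hgen : MeasurableSpace.generateFrom (Set.range t) = mX := by
    rw [← ht]; exact MeasurableSpace.generateFrom_countableGeneratingSet
  have htm : ∀ n, MeasurableSet[mX] (t n) := by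
    intro n
    rw [← hgen]
    exact MeasurableSpace.measurableSet_generateFrom (Set.mem_range_self n)
  refine ⟨Set.range (fun u : Finset ℕ => ⋂ i ∈ u, t i), Set.countable_range _, ?_, ?_, ?_⟩
  · rintro - ⟨u, rfl⟩ - ⟨v, rfl⟩ -
    exact ⟨u ∪ v, by ext y; simp [Finset.mem_union, or_imp, forall_and]⟩
  · rintro - ⟨u, rfl⟩
    exact MeasurableSet.biInter u.countable_toSet fun i _ => htm i
  · refine le_antisymm (MeasurableSpace.generateFrom_le ?_) ?_
    · rintro - ⟨u, rfl⟩
      exact MeasurableSet.biInter u.countable_toSet fun i _ => htm i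
    · rw [← hgen]
      refine MeasurableSpace.generateFrom_le fun s hs => ?_
      obtain ⟨n, rfl⟩ := hs
      exact MeasurableSpace.measurableSet_generateFrom ⟨{n}, by simp⟩

lemma stmt8_meas_pi (hπE : EMeasK mX 𝓔 π) : Measurable[𝓔] π :=
  @Measure.measurable_of_measurable_coe X X mX 𝓔 π hπE

noncomputable def stmt8K (hπE : EMeasK mX 𝓔 π) : Kernel[𝓔, mX] X X :=
  @Kernel.mk X X 𝓔 mX π (stmt8_meas_pi hπE)

lemma stmt8K_apply (hπE : EMeasK mX 𝓔 π) (a : X) : stmt8K hπE a = π a := rfl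

lemma stmt8K_fin (hπE : EMeasK mX 𝓔 π) (hb : ∀ x, π x Set.univ ≤ 1) :
    IsFiniteKernel (stmt8K hπE) :=
  ⟨⟨1, ENNReal.one_lt_top, fun a => by rw [stmt8K_apply]; exact hb a⟩⟩

lemma stmt8_meas_lint (hπE : EMeasK mX 𝓔 π) (hb : ∀ x, π x Set.univ ≤ 1)
    {f : X → ℝ≥0∞} (hf : Measurable[mX] f) :
    Measurable[𝓔] fun x => ∫⁻ y, f y ∂π x := by
  haveI := stmt8K_fin hπE hb
  have h := Measurable.lintegral_kernel (κ := stmt8K hπE) hf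
  simpa only [stmt8K_apply] using h

lemma stmt8_meas_slice (hπE : EMeasK mX 𝓔 π) (hb : ∀ x, π x Set.univ ≤ 1)
    {T : Set (X × X)} (hT : MeasurableSet[𝓔.prod mX] T) :
    Measurable[𝓔] fun x => π x (Prod.mk x ⁻¹' T) := by
  haveI := stmt8K_fin hπE hb
  have h := Kernel.measurable_kernel_prodMk_left (κ := stmt8K hπE) hT
  simpa only [stmt8K_apply] using h

lemma stmt8_measurableSet_eq {α : Type*} {m : MeasurableSpace α} {f g : α → ℝ≥0∞}
    (hf : Measurable[m] f) (hg : Measurable[m] g) : MeasurableSet[m] {x | f x = g x} := by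
  have : {x | f x = g x} = {x | f x ≤ g x} ∩ {x | g x ≤ f x} := by
    ext x; simp only [Set.mem_setOf_eq, Set.mem_inter_iff]
    exact ⟨fun h => ⟨le_of_eq h, le_of_eq h.symm⟩, fun h => le_antisymm h.1 h.2⟩
  rw [this]
  exact (measurableSet_le hf hg).inter (measurableSet_le hg hf)

section C
variable (h𝓔 : 𝓔 ≤ mX) (hπE : EMeasK mX 𝓔 π)
  (hm : ∀ F : Set X, MeasurableSet[mX] F → Measurable fun x => π x F)
  (hb : ∀ x, π x Set.univ ≤ 1)
  {μ : @Measure X mX} [IsProbabilityMeasure μ]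
  (hμ2 : ∀ E F : Set X, MeasurableSet[𝓔] E → MeasurableSet[mX] F →
      μ (E ∩ F) = ∫⁻ x in E, π x F ∂μ)

include h𝓔 hπE hμ2 in
lemma stmt8_bind_restrict_eq {E : Set X} (hE : MeasurableSet[𝓔] E) :
    (μ.restrict E).bind π = μ.restrict E := by
  ext F hF
  rw [Measure.bind_apply hF ((stmt8_meas_pi hπE).mono h𝓔 le_rfl).aemeasurable,
    Measure.restrict_apply hF, Set.inter_comm, ← hμ2 E F hE hF]

include h𝓔 hπE hμ2 in
lemma stmt8_setLIntegral_lintegral {E : Set X} (hE : MeasurableSet[𝓔] E)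
    {f : X → ℝ≥0∞} (hf : Measurable f) :
    ∫⁻ x in E, (∫⁻ y, f y ∂π x) ∂μ = ∫⁻ x in E, f x ∂μ := by
  conv_rhs => rw [← stmt8_bind_restrict_eq h𝓔 hπE hμ2 hE]
  rw [Measure.lintegral_bind ((stmt8_meas_pi hπE).mono h𝓔 le_rfl).aemeasurable hf.aemeasurable]

include h𝓔 hm hb hμ2 in
lemma stmt8_ae_proper {E : Set X} (hE : MeasurableSet[𝓔] E) :
    ∀ᵐ x ∂μ, π x E = Set.indicator E (fun _ => (1 : ℝ≥0∞)) x := by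
  have hEm : MeasurableSet E := h𝓔 E hE
  have hle : ∀ x, π x E ≤ 1 := fun x => le_trans (measure_mono (Set.subset_univ E)) (hb x)
  have h1 : ∀ᵐ x ∂μ, x ∈ E → π x E = 1 := by
    have hint : ∫⁻ x in E, π x E ∂μ = μ E := by
      rw [← hμ2 E E hE hEm, Set.inter_self]
    have hsub : ∫⁻ x in E, (1 - π x E) ∂μ = 0 := by
      rw [lintegral_sub (hm E hEm) (by rw [hint]; exact measure_ne_top μ E)
        (Filter.Eventually.of_forall fun x => hle x), hint, lintegral_one,
        Measure.restrict_apply_univ, tsub_self]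
    have := (lintegral_eq_zero_iff (measurable_const.sub (hm E hEm))).mp hsub
    rw [Filter.EventuallyEq, ae_restrict_iff' hEm] at this
    filter_upwards [this] with x hx hxE
    have := hx hxE
    exact le_antisymm (hle x) (tsub_eq_zero_iff_le.mp this)
  have h0 : ∀ᵐ x ∂μ, x ∉ E → π x E = 0 := by
    have hint : ∫⁻ x in Eᶜ, π x E ∂μ = 0 := by
      rw [← hμ2 Eᶜ E hE.compl hEm, Set.compl_inter_self]
      exact measure_empty
    have := (lintegral_eq_zero_iff (hm E hEm)).mp hint
    rw [Filter.EventuallyEq, ae_restrict_iff' hEm.compl] at this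
    filter_upwards [this] with x hx hxE
    exact hx hxE
  filter_upwards [h1, h0] with x hx1 hx0
  by_cases hxE : x ∈ E
  · rw [Set.indicator_of_mem hxE, hx1 hxE]
  · rw [Set.indicator_of_notMem hxE, hx0 hxE]

include h𝓔 hπE hm hb hμ2 in
lemma stmt8_ae_bind_eq {F : Set X} (hF : MeasurableSet[mX] F) :
    ∀ᵐ x ∂μ, π x F = ∫⁻ y, π y F ∂π x := by
  set f : X → ℝ≥0∞ := fun x => π x F with hf_def
  set g : X → ℝ≥0∞ := fun x => ∫⁻ y, π y F ∂π x with hg_def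
  have hfE : Measurable[𝓔] f := hπE F hF
  have hgE : Measurable[𝓔] g := stmt8_meas_lint hπE hb (hm F hF)
  have key : ∀ E : Set X, MeasurableSet[𝓔] E → ∫⁻ x in E, f x ∂μ = ∫⁻ x in E, g x ∂μ :=
    fun E hE => (stmt8_setLIntegral_lintegral h𝓔 hπE hμ2 hE (hm F hF)).symm
  have htrim : f =ᵐ[μ.trim h𝓔] g := by
    haveI : SigmaFinite (μ.trim h𝓔) := by
      haveI : IsFiniteMeasure (μ.trim h𝓔) := MeasureTheory.isFiniteMeasure_trim h𝓔
      infer_instance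
    refine ae_eq_of_forall_setLIntegral_eq_of_sigmaFinite hfE hgE fun s hs _ => ?_
    rw [restrict_trim h𝓔 μ hs, lintegral_trim h𝓔 hfE, lintegral_trim h𝓔 hgE]
    exact key s hs
  exact ae_eq_of_ae_eq_trim htrim
end C
end Stmt8Helpers

section Stmt8Main
open ProbabilityTheory
set_option linter.unusedSectionVars false
set_option maxHeartbeats 1000000

theorem stmt8_main {X : Type*} {𝓔 : MeasurableSpace X} [mX : MeasurableSpace X]
    [hCG : MeasurableSpace.CountablyGenerated X] (h𝓔 : 𝓔 ≤ mX) {π : X → @Measure X mX}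
    (hπ : IsQPK mX π) (hπE : EMeasK mX 𝓔 π) (hJ : J mX 𝓔 π = Jstar mX π) :
    ∃ ρ : X → @Measure X mX, IsRefinement mX 𝓔 π ρ ∧ IsNormalK mX 𝓔 ρ := by
  classical
  obtain ⟨C, hCc, hCpi, hCm, hCgen⟩ := stmt8_exists_pi (X := X)
  have hm := hπ.1
  have hb : ∀ x, π x Set.univ ≤ 1 := by
    intro x; rcases hπ.2 x with h | h <;> rw [h]
    exact zero_le_one
  set S : Set X := qpkSupp mX π with hS_def
  have hSmem : ∀ x, x ∈ S ↔ π x Set.univ = 1 := fun x => Iff.rfl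
  have hSm𝓔 : MeasurableSet[𝓔] S := by
    have h1 : Measurable[𝓔] fun x => π x Set.univ := hπE _ MeasurableSet.univ
    exact h1 (measurableSet_singleton 1)
  have hSm : MeasurableSet S := h𝓔 S hSm𝓔
  set Δ : X → Set X := fun x => S ∩ ⋂ s ∈ C, {y | π y s = π x s} with hΔ_def
  have hΔm : ∀ x, MeasurableSet (Δ x) := by
    intro x
    exact hSm.inter (MeasurableSet.biInter hCc fun s hs =>
      (hm s (hCm s hs)) (measurableSet_singleton (π x s)))
  have hΔmem : ∀ x y, y ∈ Δ x ↔ y ∈ S ∧ ∀ s ∈ C, π y s = π x s := by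
    intro x y
    simp only [hΔ_def, Set.mem_inter_iff, Set.mem_iInter, Set.mem_setOf_eq]
  have hΔeq : ∀ x, x ∈ S → ∀ y, y ∈ Δ x → π y = π x := by
    intro x hx y hy
    rw [hΔmem] at hy
    have hyS : π y Set.univ = 1 := hy.1
    have hxS : π x Set.univ = 1 := hx
    haveI : IsFiniteMeasure (π y) := ⟨by rw [hyS]; exact ENNReal.one_lt_top⟩
    refine MeasureTheory.ext_of_generate_finite C hCgen.symm hCpi (fun s hs => hy.2 s hs) ?_
    rw [hyS, hxS]
  -- the set D
  set A : Set X := {x | ∀ s ∈ C, π x s = ∫⁻ y, π y s ∂π x} with hA_def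
  set B : Set X := {x | π x (Δ x) = 1} with hB_def
  set D : Set X := (S ∩ A) ∩ B with hD_def
  have hAm𝓔 : MeasurableSet[𝓔] A := by
    have hAeq : A = ⋂ s ∈ C, {x | π x s = ∫⁻ y, π y s ∂π x} := by
      ext x; simp only [hA_def, Set.mem_iInter, Set.mem_setOf_eq]
    rw [hAeq]
    exact MeasurableSet.biInter hCc fun s hs =>
      stmt8_measurableSet_eq (hπE s (hCm s hs)) (stmt8_meas_lint hπE hb (hm s (hCm s hs)))
  have hBm𝓔 : MeasurableSet[𝓔] B := by
    set T : Set (X × X) :=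
      (Prod.snd ⁻¹' S) ∩ ⋂ s ∈ C, {p : X × X | π p.2 s = π p.1 s} with hT_def
    have hsnd : @Measurable (X × X) X (𝓔.prod mX) mX Prod.snd := by exact measurable_snd
    have hfst : @Measurable (X × X) X (𝓔.prod mX) 𝓔 Prod.fst := by exact measurable_fst
    have hTm : MeasurableSet[𝓔.prod mX] T := by
      refine (hsnd hSm).inter ?_
      refine MeasurableSet.biInter hCc fun s hs => ?_
      exact stmt8_measurableSet_eq ((hm s (hCm s hs)).comp hsnd) ((hπE s (hCm s hs)).comp hfst)
    have hslice : ∀ x, Prod.mk x ⁻¹' T = Δ x := by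
      intro x
      ext y
      rw [hΔmem]
      simp only [hT_def, Set.mem_preimage, Set.mem_inter_iff, Set.mem_iInter, Set.mem_setOf_eq]
    have hmeas : Measurable[𝓔] fun x => π x (Δ x) := by
      have h := stmt8_meas_slice hπE hb hTm
      simpa only [hslice] using h
    exact hmeas (measurableSet_singleton 1)
  have hDm𝓔 : MeasurableSet[𝓔] D := (hSm𝓔.inter hAm𝓔).inter hBm𝓔
  have hDm : MeasurableSet D := h𝓔 D hDm𝓔
  -- a.e. membership in D for every μ ∈ J
  have hDae : ∀ μ : @Measure X mX, μ ∈ J mX 𝓔 π → ∀ᵐ x ∂μ, x ∈ D := by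
    intro μ hμ
    haveI : IsProbabilityMeasure μ := hμ.1
    have hμ2 := hμ.2
    have hS_ae : ∀ᵐ x ∂μ, x ∈ S := by
      filter_upwards [stmt8_ae_proper h𝓔 hm hb hμ2 (@MeasurableSet.univ X 𝓔)] with x hx
      rw [Set.indicator_of_mem (Set.mem_univ x)] at hx
      exact hx
    have hA_ae : ∀ᵐ x ∂μ, x ∈ A := by
      have h := (ae_ball_iff hCc).mpr fun s hs =>
        stmt8_ae_bind_eq h𝓔 hπE hm hb hμ2 (hCm s hs)
      filter_upwards [h] with x hx
      exact hx
    have hB_ae : ∀ᵐ x ∂μ, x ∈ B := by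
      have hgt𝓔 : ∀ s ∈ C, ∀ q : ℚ,
          MeasurableSet[𝓔] {z | (Real.toNNReal q : ℝ≥0∞) < π z s} :=
        fun s hs q => measurableSet_lt measurable_const (hπE s (hCm s hs))
      have hlt𝓔 : ∀ s ∈ C, ∀ q : ℚ,
          MeasurableSet[𝓔] {z | π z s < (Real.toNNReal q : ℝ≥0∞)} :=
        fun s hs q => measurableSet_lt (hπE s (hCm s hs)) measurable_const
      have hq_ae : ∀ᵐ x ∂μ, ∀ s ∈ C, ∀ q : ℚ,
          (π x {z | (Real.toNNReal q : ℝ≥0∞) < π z s}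
            = Set.indicator {z | (Real.toNNReal q : ℝ≥0∞) < π z s} (fun _ => (1:ℝ≥0∞)) x)
          ∧ (π x {z | π z s < (Real.toNNReal q : ℝ≥0∞)}
            = Set.indicator {z | π z s < (Real.toNNReal q : ℝ≥0∞)} (fun _ => (1:ℝ≥0∞)) x) := by
        refine (ae_ball_iff hCc).mpr fun s hs => ae_all_iff.mpr fun q => ?_
        exact (stmt8_ae_proper h𝓔 hm hb hμ2 (hgt𝓔 s hs q)).and
          (stmt8_ae_proper h𝓔 hm hb hμ2 (hlt𝓔 s hs q))
      have hSprop : ∀ᵐ x ∂μ, π x S = Set.indicator S (fun _ => (1:ℝ≥0∞)) x :=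
        stmt8_ae_proper h𝓔 hm hb hμ2 hSm𝓔
      filter_upwards [hq_ae, hSprop, hS_ae] with x hx hxS hxmem
      have hcompl : π x ((Δ x)ᶜ) = 0 := by
        have hsub : (Δ x)ᶜ ⊆ Sᶜ ∪ ⋃ s ∈ C, {y | π y s ≠ π x s} := by
          intro y hy
          rw [Set.mem_compl_iff, hΔmem] at hy
          push_neg at hy
          by_cases hyS : y ∈ S
          · obtain ⟨s, hs, hne⟩ := hy hyS
            exact Or.inr (Set.mem_biUnion hs hne)
          · exact Or.inl hyS
        refine measure_mono_null hsub (measure_union_null ?_ ?_)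
        · have h1 : π x S = 1 := by rw [hxS, Set.indicator_of_mem hxmem]
          have h2 : π x Set.univ = 1 := hxmem
          rw [measure_compl hSm (by rw [h1]; exact ENNReal.one_ne_top), h2, h1, tsub_self]
        · rw [measure_biUnion_null_iff hCc]
          intro s hs
          have hsub2 : {y | π y s ≠ π x s} ⊆
              ⋃ q : ℚ, ({y | π x s < (Real.toNNReal q : ℝ≥0∞)
                  ∧ (Real.toNNReal q : ℝ≥0∞) < π y s}
                ∪ {y | π y s < (Real.toNNReal q : ℝ≥0∞)
                  ∧ (Real.toNNReal q : ℝ≥0∞) < π x s}) := by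
            intro y hy
            rcases lt_or_gt_of_ne hy with h | h
            · obtain ⟨q, _, h1, h2⟩ := ENNReal.lt_iff_exists_rat_btwn.mp h
              exact Set.mem_iUnion.mpr ⟨q, Or.inr ⟨h1, h2⟩⟩
            · obtain ⟨q, _, h1, h2⟩ := ENNReal.lt_iff_exists_rat_btwn.mp h
              exact Set.mem_iUnion.mpr ⟨q, Or.inl ⟨h1, h2⟩⟩
          refine measure_mono_null hsub2 (measure_iUnion_null fun q => measure_union_null ?_ ?_)
          · by_cases hpq : π x s < (Real.toNNReal q : ℝ≥0∞)
            · have hset : {y | π x s < (Real.toNNReal q : ℝ≥0∞)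
                  ∧ (Real.toNNReal q : ℝ≥0∞) < π y s}
                  = {z | (Real.toNNReal q : ℝ≥0∞) < π z s} := by
                ext y; simp only [Set.mem_setOf_eq, hpq, true_and]
              rw [hset, (hx s hs q).1, Set.indicator_of_notMem]
              exact fun hcon => lt_asymm hpq hcon
            · have hset : {y | π x s < (Real.toNNReal q : ℝ≥0∞)
                  ∧ (Real.toNNReal q : ℝ≥0∞) < π y s} = (∅ : Set X) :=
                Set.eq_empty_iff_forall_notMem.mpr fun y hy => hpq hy.1
              rw [hset]; exact measure_empty
          · by_cases hpq : (Real.toNNReal q : ℝ≥0∞) < π x s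
            · have hset : {y | π y s < (Real.toNNReal q : ℝ≥0∞)
                  ∧ (Real.toNNReal q : ℝ≥0∞) < π x s}
                  = {z | π z s < (Real.toNNReal q : ℝ≥0∞)} := by
                ext y; simp only [Set.mem_setOf_eq, hpq, and_true]
              rw [hset, (hx s hs q).2, Set.indicator_of_notMem]
              exact fun hcon => lt_asymm hpq hcon
            · have hset : {y | π y s < (Real.toNNReal q : ℝ≥0∞)
                  ∧ (Real.toNNReal q : ℝ≥0∞) < π x s} = (∅ : Set X) :=
                Set.eq_empty_iff_forall_notMem.mpr fun y hy => hpq hy.2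
              rw [hset]; exact measure_empty
      have huniv : π x Set.univ = 1 := hxmem
      have h := measure_add_measure_compl (μ := π x) (hΔm x)
      rw [hcompl, add_zero, huniv] at h
      exact h
    filter_upwards [hS_ae, hA_ae, hB_ae] with x h1 h2 h3
    exact ⟨⟨h1, h2⟩, h3⟩
  have hπmX : Measurable π := (stmt8_meas_pi hπE).mono h𝓔 le_rfl
  -- points of D give members of J
  have hDJ : ∀ x ∈ D, π x ∈ J mX 𝓔 π := by
    intro x hx
    obtain ⟨⟨hxS, hxA⟩, hxB⟩ := hx
    have hxS1 : π x Set.univ = 1 := hxS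
    haveI : IsProbabilityMeasure (π x) := ⟨hxS1⟩
    have hxΔ : π x (Δ x) = 1 := hxB
    have hΔS : Δ x ⊆ S := Set.inter_subset_left
    have hxSfull : π x S = 1 := le_antisymm
      (le_trans (measure_mono (Set.subset_univ S)) (le_of_eq hxS1))
      (le_trans (le_of_eq hxΔ.symm) (measure_mono hΔS))
    have hindS : ∀ y, π y Set.univ = Set.indicator S (fun _ => (1:ℝ≥0∞)) y := by
      intro y
      rcases hπ.2 y with h | h
      · rw [h, Set.indicator_of_notMem]
        intro hyS
        have h1 : π y Set.univ = 1 := hyS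
        rw [h] at h1
        exact zero_ne_one h1
      · rw [h, Set.indicator_of_mem]
        exact h
    have hbind : π x = (π x).bind π := by
      refine MeasureTheory.ext_of_generate_finite C hCgen.symm hCpi (fun s hs => ?_) ?_
      · rw [Measure.bind_apply (hCm s hs) hπmX.aemeasurable]
        exact hxA s hs
      · rw [Measure.bind_apply MeasurableSet.univ hπmX.aemeasurable, lintegral_congr hindS,
          lintegral_indicator_const hSm, hxSfull, hxS1, mul_one]
    rw [hJ]
    refine ⟨inferInstance, fun F hF => ?_⟩
    conv_lhs => rw [hbind]
    rw [Measure.bind_apply hF hπmX.aemeasurable]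
  -- points of D are trivial on 𝓔
  have hDtriv : ∀ x ∈ D, IsTrivialOn mX 𝓔 (π x) := by
    intro x hx E hE
    have hxJ := hDJ x hx
    obtain ⟨⟨hxS, hxA⟩, hxB⟩ := hx
    have hxS1 : π x Set.univ = 1 := hxS
    haveI : IsProbabilityMeasure (π x) := ⟨hxS1⟩
    have hEm : MeasurableSet E := h𝓔 E hE
    have hcompl : π x ((Δ x)ᶜ) = 0 := by
      have h := measure_add_measure_compl (μ := π x) (hΔm x)
      have hxΔ : π x (Δ x) = 1 := hxB
      rw [hxΔ, hxS1] at h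
      nth_rewrite 2 [← add_zero (1 : ℝ≥0∞)] at h
      exact (ENNReal.add_right_inj ENNReal.one_ne_top).mp h
    have hae : ∀ᵐ y ∂π x, π y E = π x E := by
      rw [ae_iff]
      refine measure_mono_null ?_ hcompl
      intro y hy hyΔ
      exact hy (by rw [hΔeq x hxS y hyΔ])
    have key : π x E = π x E * π x E := by
      have h1 : π x (E ∩ E) = ∫⁻ y in E, π y E ∂π x := hxJ.2 E E hE hEm
      rw [Set.inter_self, lintegral_congr_ae (ae_restrict_of_ae hae),
        setLIntegral_const] at h1
      exact h1
    rcases eq_or_ne (π x E) 0 with h | h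
    · exact Or.inl h
    · refine Or.inr ?_
      have h2 : π x E * 1 = π x E * π x E := by rw [mul_one]; exact key
      exact ((ENNReal.mul_right_inj h (measure_ne_top _ _)).mp h2).symm
  -- the refinement
  refine ⟨kerRestrict mX π D, ?_⟩
  have hρ_apply : ∀ x F, kerRestrict mX π D x F = Set.indicator D (fun z => π z F) x := by
    intro x F
    by_cases hx : x ∈ D
    · simp only [kerRestrict, Set.indicator_of_mem hx]
    · simp only [kerRestrict, Set.indicator_of_notMem hx]
      rfl
  have hcongr : ∀ (μ : @Measure X mX), μ Dᶜ = 0 → ∀ E F : Set X,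
      ∫⁻ x in E, kerRestrict mX π D x F ∂μ = ∫⁻ x in E, π x F ∂μ := by
    intro μ hD0 E F
    refine lintegral_congr_ae (ae_restrict_of_ae ?_)
    rw [ae_iff]
    refine measure_mono_null ?_ hD0
    intro y hy
    simp only [Set.mem_setOf_eq] at hy
    intro hyD
    exact hy (by rw [hρ_apply, Set.indicator_of_mem hyD])
  have hJρ : J mX 𝓔 (kerRestrict mX π D) = J mX 𝓔 π := by
    ext μ
    constructor
    · rintro ⟨hp, hμ2⟩
      haveI := hp
      have hD0 : μ Dᶜ = 0 := by
        have h := hμ2 Dᶜ Set.univ hDm𝓔.compl MeasurableSet.univ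
        rw [Set.inter_univ] at h
        rw [h]
        have hz : ∫⁻ x in Dᶜ, kerRestrict mX π D x Set.univ ∂μ
            = ∫⁻ x in Dᶜ, 0 ∂μ := by
          refine setLIntegral_congr_fun hDm.compl (fun y hy => ?_)
          rw [hρ_apply, Set.indicator_of_notMem hy]
        rw [hz, lintegral_zero]
      exact ⟨hp, fun E F hE hF => by
        rw [← hcongr μ hD0 E F]; exact hμ2 E F hE hF⟩
    · rintro ⟨hp, hμ2⟩
      haveI := hp
      have hD1 : ∀ᵐ x ∂μ, x ∈ D := hDae μ ⟨hp, hμ2⟩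
      have hD0 : μ Dᶜ = 0 := ae_iff.mp hD1
      exact ⟨hp, fun E F hE hF => by
        rw [hcongr μ hD0 E F]; exact hμ2 E F hE hF⟩
  have hsuppρ : qpkSupp mX (kerRestrict mX π D) = D := by
    ext x
    by_cases hx : x ∈ D
    · have h1 : π x Set.univ = 1 := hx.1.1
      simp only [qpkSupp, Set.mem_setOf_eq, hρ_apply, Set.indicator_of_mem hx]
      simp [hx, h1]
    · simp only [qpkSupp, Set.mem_setOf_eq, hρ_apply, Set.indicator_of_notMem hx]
      simp [hx]
  have hρD : ∀ x ∈ D, kerRestrict mX π D x = π x := by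
    intro x hx
    simp only [kerRestrict, Set.indicator_of_mem hx]
  refine ⟨⟨⟨?_, ?_⟩, ?_, ⟨D, hDm𝓔, rfl⟩, hJρ⟩, ?_, ?_⟩
  · -- measurability (mX) of ρ(·,F)
    intro F hF
    have hfun : (fun x => kerRestrict mX π D x F) = Set.indicator D (fun z => π z F) :=
      funext fun x => hρ_apply x F
    rw [hfun]
    exact (hm F hF).indicator hDm
  · -- masses
    intro x
    by_cases hx : x ∈ D
    · rw [hρ_apply, Set.indicator_of_mem hx]
      exact hπ.2 x
    · rw [hρ_apply, Set.indicator_of_notMem hx]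
      exact Or.inl rfl
  · -- EMeasK
    intro F hF
    have hfun : (fun x => kerRestrict mX π D x F) = Set.indicator D (fun z => π z F) :=
      funext fun x => hρ_apply x F
    rw [hfun]
    exact Measurable.indicator (hπE F hF) hDm𝓔
  · -- adapted
    intro x hx
    rw [hsuppρ] at hx
    rw [hρD x hx, hJρ]
    exact hDJ x hx
  · -- trivial
    intro x hx
    rw [hsuppρ] at hx
    rw [hρD x hx]
    exact hDtriv x hx

end Stmt8Main

/-- if `J_𝓔(π) = J_⋆(π)` then there exists a normal refinement of `π`. -/
theorem stmt8 (mX : MeasurableSpace X) (hCG : @MeasurableSpace.CountablyGenerated X mX)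
    (𝓔 : MeasurableSpace X) (h𝓔 : 𝓔 ≤ mX)
    (π : X → @Measure X mX) (hπ : IsQPK mX π) (hπE : EMeasK mX 𝓔 π)
    (hJ : J mX 𝓔 π = Jstar mX π) :
    ∃ ρ : X → @Measure X mX, IsRefinement mX 𝓔 π ρ ∧ IsNormalK mX 𝓔 ρ :=
  @stmt8_main X 𝓔 mX hCG h𝓔 π hπ hπE hJ
end

section
/- Let π be a quasi-probability kernel on (X,𝓕) and let 𝓢_π denote the least sub-σ-algebra of 𝓕 with respect to which π is measurable, i.e. the σ-algebra generated by the functions π(·,F), F ∈ 𝓕. Then 𝓢_π is countably generated. -/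
open MeasureTheory
open scoped ENNReal

variable {X : Type*}

/-- A countable supremum of countably generated σ-algebras is countably generated. -/
lemma cg_iSup {ι : Type*} [Countable ι] (m : ι → MeasurableSpace X)
    (h : ∀ i, @MeasurableSpace.CountablyGenerated X (m i)) :
    @MeasurableSpace.CountablyGenerated X (⨆ i, m i) := by
  choose b hb hgen using fun i => (h i).isCountablyGenerated
  have heq : (⨆ i, m i) = MeasurableSpace.generateFrom (⋃ i, b i) := by
    rw [← MeasurableSpace.iSup_generateFrom]
    exact iSup_congr hgen
  exact @MeasurableSpace.CountablyGenerated.mk X (⨆ i, m i)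
    ⟨⋃ i, b i, Set.countable_iUnion hb, heq⟩

/-- the least σ-algebra `𝓢_π` making `π` measurable is countably
generated. -/
theorem stmt9 (mX : MeasurableSpace X) (hCG : @MeasurableSpace.CountablyGenerated X mX)
    (π : X → @Measure X mX) (hπ : IsQPK mX π) :
    @MeasurableSpace.CountablyGenerated X (Spi mX π) := by
  haveI := hCG
  -- a countable generating sequence for mX
  set g : ℕ → Set X := MeasurableSpace.natGeneratingSequence X with hg
  have hgmeas : ∀ n, MeasurableSet[mX] (g n) :=
    MeasurableSpace.measurableSet_natGeneratingSequence
  -- the countable π-system of finite intersections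
  set T : Finset ℕ → Set X := fun s => ⋂ i ∈ s, g i with hT
  have hTmeas : ∀ s, MeasurableSet[mX] (T s) := fun s =>
    Finset.measurableSet_biInter s fun i _ => hgmeas i
  have hTunion : ∀ s t : Finset ℕ, T (s ∪ t) = T s ∩ T t := by
    intro s t
    ext x
    simp only [hT, Set.mem_iInter, Finset.mem_union, Set.mem_inter_iff]
    constructor
    · intro h; exact ⟨fun i hi => h i (Or.inl hi), fun i hi => h i (Or.inr hi)⟩
    · rintro ⟨h1, h2⟩ i (hi | hi); exacts [h1 i hi, h2 i hi]
  have hTuniv : T ∅ = Set.univ := by simp [hT]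
  -- mX is generated by the range of T
  have hgen : mX = MeasurableSpace.generateFrom (Set.range T) := by
    refine le_antisymm ?_ ?_
    · conv_lhs => rw [← MeasurableSpace.generateFrom_natGeneratingSequence X]
      refine MeasurableSpace.generateFrom_le fun t ht => ?_
      rcases ht with ⟨n, rfl⟩
      refine MeasurableSpace.measurableSet_generateFrom ⟨{n}, ?_⟩
      simp [hT, hg]
    · refine MeasurableSpace.generateFrom_le fun t ht => ?_
      rcases ht with ⟨s, rfl⟩
      exact hTmeas s
  have hpi : IsPiSystem (Set.range T) := by
    rintro _ ⟨s, rfl⟩ _ ⟨t, rfl⟩ -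
    exact ⟨s ∪ t, (hTunion s t)⟩
  -- the candidate countably generated σ-algebra
  set m' : MeasurableSpace X :=
    ⨆ s : Finset ℕ, MeasurableSpace.comap (fun x => π x (T s)) inferInstance with hm'
  have hm'cg : @MeasurableSpace.CountablyGenerated X m' :=
    cg_iSup _ fun s => MeasurableSpace.CountablyGenerated.comap _
  -- every π(·, T s) is m'-measurable
  have hTmble : ∀ s : Finset ℕ, Measurable[m'] fun x => π x (T s) := fun s =>
    Measurable.of_comap_le (le_iSup (fun s : Finset ℕ =>
      MeasurableSpace.comap (fun x => π x (T s)) inferInstance) s)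
  -- π(x, F) is finite for every x, F
  have hfin : ∀ (x : X) (F : Set X), π x F ≠ ⊤ := by
    intro x F
    refine ne_top_of_le_ne_top ?_ (measure_mono (Set.subset_univ F))
    rcases hπ.2 x with h | h <;> simp [h]
  -- key step: π(·, F) is m'-measurable for every mX-measurable F
  have key : ∀ ⦃F : Set X⦄, MeasurableSet[mX] F → Measurable[m'] fun x => π x F := by
    refine MeasurableSpace.induction_on_inter (m := mX)
      (C := fun F _ => Measurable[m'] fun x => π x F) hgen hpi ?_ ?_ ?_ ?_
    · simp only [measure_empty]; exact measurable_const
    · rintro t ⟨s, rfl⟩; exact hTmble s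
    · intro t ht hmt
      have heq : (fun x => π x tᶜ) = fun x => π x Set.univ - π x t := by
        funext x
        exact measure_compl ht (hfin x t)
      rw [heq]
      have huniv : Measurable[m'] fun x => π x Set.univ := by
        have := hTmble ∅
        rwa [hTuniv] at this
      exact huniv.sub hmt
    · intro f hdisj hfm hm
      have heq : (fun x => π x (⋃ i, f i)) = fun x => ∑' i, π x (f i) := by
        funext x
        exact measure_iUnion hdisj hfm
      rw [heq]
      exact Measurable.ennreal_tsum hm
  -- conclude: Spi = m'
  have hSpi : Spi mX π = m' := by
    refine le_antisymm ?_ ?_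
    · refine iSup₂_le fun F hF => ?_
      exact Measurable.comap_le (key hF)
    · refine iSup_le fun s => ?_
      exact le_trans (le_refl _) (le_iSup₂ (f := fun (F : Set X)
        (_ : F ∈ {F : Set X | MeasurableSet[mX] F}) =>
          MeasurableSpace.comap (fun x => π x F) inferInstance) (T s) (hTmeas s))
  rw [hSpi]
  exact hm'cg
end

section
/- Let π be an 𝓔-measurable quasi-probability kernel. Then π is proper as an 𝓝_π-measurable kernel (i.e. π(x, N ∩ F) = 1_N(x)·π(x,F) for all N ∈ 𝓝_π, F ∈ 𝓕 and x ∈ X) if and only if π(x, Δ^π_x) = 1 for every x ∈ S_π. -/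
open MeasureTheory
open scoped ENNReal

variable {X : Type*}

open MeasurableSpace in
lemma delta_measurable (mX : MeasurableSpace X)
    (hCG : @MeasurableSpace.CountablyGenerated X mX)
    (π : X → @Measure X mX) (hπ : IsQPK mX π) (x : X) (hx : x ∈ qpkSupp mX π) :
    MeasurableSet[mX] (Delta mX π x) := by
  obtain ⟨S, hSc, hSgen⟩ := hCG.isCountablyGenerated
  set T : Set (Set X) := Set.sInter '' {t | t.Finite ∧ t ⊆ S ∧ t.Nonempty} with hT
  have hTc : T.Countable := by
    apply Set.Countable.image
    refine (Set.countable_setOf_finite_subset hSc).mono ?_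
    rintro t ⟨h1, h2, -⟩
    exact ⟨h1, h2⟩
  have hTpi : IsPiSystem T := by
    rintro _ ⟨t, ⟨htf, htS, htne⟩, rfl⟩ _ ⟨u, ⟨huf, huS, hune⟩, rfl⟩ h
    exact ⟨t ∪ u, ⟨htf.union huf, Set.union_subset htS huS,
      htne.mono Set.subset_union_left⟩, Set.sInter_union t u⟩
  have hTgen : mX = generateFrom T := by
    rw [hSgen]
    apply le_antisymm
    · exact generateFrom_mono fun s hs => ⟨{s}, ⟨Set.finite_singleton s,
        Set.singleton_subset_iff.2 hs, Set.singleton_nonempty s⟩, Set.sInter_singleton s⟩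
    · apply generateFrom_le
      rintro _ ⟨t, ⟨htf, htS, -⟩, rfl⟩
      exact Set.Finite.measurableSet_sInter htf fun s hs => measurableSet_generateFrom (htS hs)
  have hTmeas : ∀ F ∈ T, MeasurableSet[mX] F := by
    intro F hF; rw [hTgen]; exact measurableSet_generateFrom hF
  have hx' : π x Set.univ = 1 := hx
  have hkey : Delta mX π x = qpkSupp mX π ∩ ⋂ F ∈ T, {y | π y F = π x F} := by
    ext y
    simp only [Delta, Set.mem_setOf_eq, Set.mem_inter_iff, Set.mem_iInter]
    constructor
    · rintro ⟨h1, h2⟩; exact ⟨h1, fun F hF => by rw [h2]⟩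
    · rintro ⟨h1, h2⟩
      have h1' : π y Set.univ = 1 := h1
      haveI : IsFiniteMeasure (π y) := ⟨by rw [h1']; exact ENNReal.one_lt_top⟩
      exact ⟨h1, MeasureTheory.ext_of_generate_finite T hTgen hTpi h2 (by rw [h1', hx'])⟩
  rw [hkey]
  refine MeasurableSet.inter ?_ (MeasurableSet.biInter hTc fun F hF => ?_)
  · exact (hπ.1 Set.univ MeasurableSet.univ) (measurableSet_singleton 1)
  · exact (hπ.1 F (hTmeas F hF)) (measurableSet_singleton (π x F))

lemma delta_mem_NSigma (mX : MeasurableSpace X)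
    (hCG : @MeasurableSpace.CountablyGenerated X mX)
    (π : X → @Measure X mX) (hπ : IsQPK mX π) (x : X) (hx : x ∈ qpkSupp mX π) :
    MeasurableSet[NSigma mX π] (Delta mX π x) := by
  refine ⟨delta_measurable mX hCG π hπ x hx, fun y hy => ?_⟩
  by_cases h : π y = π x
  · exact Or.inl fun z hz => ⟨hz.1, hz.2.trans h⟩
  · refine Or.inr (Set.eq_empty_iff_forall_notMem.2 fun z hz => h ?_)
    exact hz.1.2.symm.trans hz.2.2

/-- `π` is proper as an `𝓝_π`-measurable kernel iff `π(x, Δ^π_x) = 1` for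
every `x ∈ S_π`. -/
theorem stmt12 (mX : MeasurableSpace X) (hCG : @MeasurableSpace.CountablyGenerated X mX)
    (𝓔 : MeasurableSpace X) (h𝓔 : 𝓔 ≤ mX)
    (π : X → @Measure X mX) (hπ : IsQPK mX π) (hπE : EMeasK mX 𝓔 π) :
    IsProperK mX (NSigma mX π) π ↔ ∀ x ∈ qpkSupp mX π, π x (Delta mX π x) = 1 := by
  constructor
  · intro hp x hx
    have := hp (Delta mX π x) Set.univ (delta_mem_NSigma mX hCG π hπ x hx)
      MeasurableSet.univ x
    have hxD : x ∈ Delta mX π x := ⟨hx, rfl⟩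
    rw [Set.inter_univ, Set.indicator_of_mem hxD] at this
    rw [this]; exact hx
  · intro h N F hN hFm x
    by_cases hx : x ∈ qpkSupp mX π
    · have hΔm := delta_measurable mX hCG π hπ x hx
      have hx' : π x Set.univ = 1 := hx
      haveI : IsFiniteMeasure (π x) := ⟨by rw [hx']; exact ENNReal.one_lt_top⟩
      have hΔc : π x (Delta mX π x)ᶜ = 0 := by
        rw [measure_compl hΔm (measure_ne_top _ _), hx', h x hx, tsub_self]
      rcases hN.2 x hx with hsub | hdis
      · have hxN : x ∈ N := hsub ⟨hx, rfl⟩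
        rw [Set.indicator_of_mem hxN, Set.inter_comm,
          measure_inter_conull (measure_mono_null (Set.compl_subset_compl.2 hsub) hΔc)]
      · have hxN : x ∉ N := fun hxN =>
          Set.eq_empty_iff_forall_notMem.1 hdis x ⟨⟨hx, rfl⟩, hxN⟩
        rw [Set.indicator_of_notMem hxN]
        have hNsub : N ⊆ (Delta mX π x)ᶜ := fun z hz hzΔ =>
          Set.eq_empty_iff_forall_notMem.1 hdis z ⟨hzΔ, hz⟩
        exact measure_mono_null (Set.inter_subset_left.trans hNsub) hΔc
    · have h0 : π x Set.univ = 0 := (hπ.2 x).resolve_right hx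
      have hz : ∀ s : Set X, π x s = 0 := fun s =>
        measure_mono_null (Set.subset_univ s) h0
      classical
      rw [hz, Set.indicator_apply]
      split_ifs <;> simp [hz]
end
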